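/- arXiv:math/9408208 — 8 statements merged into one kernel-verified Lean document; each statement's English description precedes it below -/
import Mathlib

section
/- Pelczynski decomposition method: if E and F are Banach spaces, each isomorphic to a complemented subspace of the other, and both E and F are isomorphic to their squares E ⊕ E and F ⊕ F respectively, then E and F are isomorphic. -/
/-- If `P ∘ S = id`, then `F` splits as `E × ker P`. -/
noncomputable def splitEquiv {E F : Type*} [NormedAddCommGroup E] [NormedSpace ℝ E]
    [NormedAddCommGroup F] [NormedSpace ℝ F]
    (S : E →L[ℝ] F) (P : F →L[ℝ] E) (hSP : ∀ x, P (S x) = x) :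
    F ≃L[ℝ] E × (LinearMap.ker (P : F →ₗ[ℝ] E)) :=
  ContinuousLinearEquiv.equivOfInverse
    (P.prod ((ContinuousLinearMap.id ℝ F - S.comp P).codRestrict (LinearMap.ker (P : F →ₗ[ℝ] E))
      (fun y => by simp [hSP])))
    (S.coprod (LinearMap.ker (P : F →ₗ[ℝ] E)).subtypeL)
    (fun y => by simp)
    (fun p => by
      obtain ⟨x, z, hz⟩ := p
      simp only [LinearMap.mem_ker, ContinuousLinearMap.coe_coe] at hz
      apply Prod.ext <;>
        simp [hz, hSP, Subtype.ext_iff])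

/-- Pelczynski decomposition method: if Banach spaces `E` and `F` are each isomorphic to a
complemented subspace of the other, and both are isomorphic to their squares, then `E ∼ F`. -/
theorem pelczynski_decomposition_squares
    (E F : Type*) [NormedAddCommGroup E] [NormedSpace ℝ E] [CompleteSpace E]
    [NormedAddCommGroup F] [NormedSpace ℝ F] [CompleteSpace F]
    (S : E →L[ℝ] F) (P : F →L[ℝ] E) (hSP : ∀ x, P (S x) = x)
    (S' : F →L[ℝ] E) (P' : E →L[ℝ] F) (hSP' : ∀ y, P' (S' y) = y)
    (hEsq : Nonempty (E ≃L[ℝ] (E × E))) (hFsq : Nonempty (F ≃L[ℝ] (F × F))) :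
    Nonempty (E ≃L[ℝ] F) := by
  obtain ⟨eE⟩ := hEsq
  obtain ⟨eF⟩ := hFsq
  set X := LinearMap.ker (P : F →ₗ[ℝ] E) with hX
  set Y := LinearMap.ker (P' : E →ₗ[ℝ] F) with hY
  have e1 : F ≃L[ℝ] E × X := splitEquiv S P hSP
  have e2 : E ≃L[ℝ] F × Y := splitEquiv S' P' hSP'
  have assocF := (LinearIsometryEquiv.prodAssoc ℝ F F Y).toContinuousLinearEquiv
  have assocE := (LinearIsometryEquiv.prodAssoc ℝ E E X).toContinuousLinearEquiv
  -- E ≃ F × Y ≃ (F×F) × Y ≃ F × (F×Y) ≃ F × E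
  have hA : E ≃L[ℝ] F × E := e2.trans <| (eF.prodCongr (ContinuousLinearEquiv.refl ℝ Y)).trans <|
    assocF.trans <| (ContinuousLinearEquiv.refl ℝ F).prodCongr e2.symm
  -- F ≃ E × X ≃ (E×E) × X ≃ E × (E×X) ≃ E × F
  have hB : F ≃L[ℝ] E × F := e1.trans <| (eE.prodCongr (ContinuousLinearEquiv.refl ℝ X)).trans <|
    assocE.trans <| (ContinuousLinearEquiv.refl ℝ E).prodCongr e1.symm
  exact ⟨hA.trans <| (ContinuousLinearEquiv.prodComm ℝ F E).trans hB.symm⟩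
end

section
/- Let σ : ℤ → (0,∞) be σ(n) = 2^n, and let μ be the atomic measure on ℤ with μ{n} = 2^n. Then the map T : ℓ^{p,∞}(ℤ,σ) → ℓ^∞ defined by T((a_n)_{n∈ℤ}) = (2^{n/p} a_n)_{n∈ℤ} is a surjective isomorphism; specifically, ‖T a‖_∞ ≤ ‖a‖ and ‖a‖ ≤ 2^{1/p} ‖T a‖_∞ for all a ∈ ℓ^{p,∞}(ℤ,σ). -/
open ENNReal

/-- The weak `ℓ^p` quasi-norm on `ℤ` with the atomic measure `μ{n} = 2^n`. -/
noncomputable def weakNormZ (p : ℝ) (a : ℤ → ℝ) : ℝ≥0∞ :=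
  ⨆ (c : ℝ) (_ : 0 < c),
    ENNReal.ofReal c * (∑' n : {n : ℤ // c < |a n|}, (2 : ℝ≥0∞) ^ (n.1 : ℤ)) ^ ((1 : ℝ)/p)

lemma geomZ (N : ℤ) : ∑' n : {n : ℤ // n ≤ N}, (2:ℝ≥0∞)^(n.1:ℤ) = 2^(N+1) := by
  let e : ℕ ≃ {n : ℤ // n ≤ N} :=
    { toFun := fun k => ⟨N - k, by omega⟩
      invFun := fun n => (N - n.1).toNat
      left_inv := fun k => by simp
      right_inv := fun n => by
        ext
        have := n.2
        show N - ((N - n.1).toNat : ℤ) = n.1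
        omega }
  rw [← e.tsum_eq]
  have h1 : ∀ k : ℕ, (2:ℝ≥0∞) ^ (((e k).1 : ℤ)) = 2^N * (2⁻¹:ℝ≥0∞)^k := by
    intro k
    have : ((e k).1 : ℤ) = N - k := rfl
    rw [this, sub_eq_add_neg, ENNReal.zpow_add two_ne_zero ofNat_ne_top,
      ENNReal.zpow_neg, zpow_natCast, ENNReal.inv_pow]
  simp_rw [h1]
  rw [ENNReal.tsum_mul_left, ENNReal.tsum_geometric, ENNReal.one_sub_inv_two,
    ENNReal.zpow_add two_ne_zero ofNat_ne_top]
  simp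

lemma two_rpow_eq (y : ℝ) : (2:ℝ≥0∞) ^ y = ENNReal.ofReal ((2:ℝ) ^ y) := by
  rw [← ENNReal.ofReal_rpow_of_pos (by norm_num : (0:ℝ) < 2)]
  norm_num

lemma weakNormZ_upper (p : ℝ) (hp : 1 < p) (a : ℤ → ℝ) :
    weakNormZ p a ≤
      (2 : ℝ≥0∞) ^ ((1 : ℝ)/p) * ⨆ n : ℤ, ENNReal.ofReal |(2 : ℝ) ^ ((n : ℝ)/p) * a n| := by
  have hp0 : (0:ℝ) < p := lt_trans one_pos hp
  have hip : (0:ℝ) < 1/p := by positivity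
  set M : ℝ≥0∞ := ⨆ n : ℤ, ENNReal.ofReal |(2 : ℝ) ^ ((n : ℝ)/p) * a n| with hMdef
  by_cases hM : M = ⊤
  · rw [hM, ENNReal.mul_top (ENNReal.rpow_pos (by norm_num) ofNat_ne_top).ne']
    exact le_top
  refine iSup₂_le fun c hc => ?_
  by_cases hS : ∃ n : ℤ, c < |a n|
  · obtain ⟨n₀, hn₀⟩ := hS
    set M' : ℝ := M.toReal with hM'def
    have habs : ∀ n : ℤ, |(2 : ℝ) ^ ((n : ℝ)/p) * a n| ≤ M' := by
      intro n
      rw [← ENNReal.ofReal_le_iff_le_toReal hM]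
      exact le_iSup (fun n : ℤ => ENNReal.ofReal |(2 : ℝ) ^ ((n : ℝ)/p) * a n|) n
    have hM'pos : 0 < M' := by
      have h1 := habs n₀
      have h2 : 0 < |(2 : ℝ) ^ ((n₀ : ℝ)/p) * a n₀| := by
        rw [abs_mul]
        exact mul_pos (abs_pos.2 (by positivity)) (hc.trans hn₀)
      linarith
    have hMc : 0 < M' / c := by positivity
    set N : ℤ := ⌊p * Real.logb 2 (M' / c)⌋ with hNdef
    have hsub : ∀ n : ℤ, c < |a n| → n ≤ N := by
      intro n hn
      have h1 : c * (2:ℝ) ^ ((n : ℝ)/p) ≤ M' := by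
        calc c * (2:ℝ) ^ ((n : ℝ)/p) ≤ |a n| * (2:ℝ) ^ ((n : ℝ)/p) := by
              apply mul_le_mul_of_nonneg_right hn.le (by positivity)
          _ = |(2 : ℝ) ^ ((n : ℝ)/p) * a n| := by
              rw [abs_mul, abs_of_pos (by positivity : (0:ℝ) < (2:ℝ) ^ ((n : ℝ)/p)), mul_comm]
          _ ≤ M' := habs n
      have h2 : (2:ℝ) ^ ((n : ℝ)/p) ≤ M' / c := by
        rw [le_div_iff₀ hc]; linarith [mul_comm c ((2:ℝ) ^ ((n : ℝ)/p))]
      have h3 : (n : ℝ)/p ≤ Real.logb 2 (M' / c) := by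
        have := Real.logb_le_logb_of_le (b := 2) (by norm_num) (by positivity) h2
        rwa [Real.logb_rpow (by norm_num) (by norm_num)] at this
      have h4 : (n : ℝ) ≤ p * Real.logb 2 (M' / c) := by
        rw [div_le_iff₀ hp0] at h3; linarith
      exact_mod_cast Int.le_floor.2 h4
    have htsum : (∑' n : {n : ℤ // c < |a n|}, (2 : ℝ≥0∞) ^ (n.1 : ℤ)) ≤ 2 ^ (N+1) := by
      rw [← geomZ N]
      exact tsum_comp_le_tsum_of_injective
        (f := fun n : {n : ℤ // c < |a n|} => (⟨n.1, hsub n.1 n.2⟩ : {n : ℤ // n ≤ N}))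
        (fun x y hxy => by
          apply Subtype.ext
          simpa using congrArg Subtype.val hxy)
        (fun n : {n : ℤ // n ≤ N} => (2 : ℝ≥0∞) ^ (n.1 : ℤ))
    calc ENNReal.ofReal c * (∑' n : {n : ℤ // c < |a n|}, (2 : ℝ≥0∞) ^ (n.1 : ℤ)) ^ ((1 : ℝ)/p)
        ≤ ENNReal.ofReal c * ((2:ℝ≥0∞) ^ (N+1)) ^ ((1 : ℝ)/p) :=
          mul_le_mul_right (ENNReal.rpow_le_rpow htsum hip.le) _
      _ = ENNReal.ofReal c * (2:ℝ≥0∞) ^ (((N:ℝ)+1) * (1/p)) := by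
          rw [← ENNReal.rpow_intCast 2 (N+1), ← ENNReal.rpow_mul]
          push_cast
          ring_nf
      _ = (2:ℝ≥0∞) ^ ((1:ℝ)/p) * (ENNReal.ofReal c * (2:ℝ≥0∞) ^ ((N:ℝ) * (1/p))) := by
          rw [add_mul, one_mul, ENNReal.rpow_add _ _ two_ne_zero ofNat_ne_top]
          ring
      _ ≤ (2:ℝ≥0∞) ^ ((1:ℝ)/p) * M := by
          apply mul_le_mul_right
          rw [two_rpow_eq, ← ENNReal.ofReal_mul hc.le]
          have h5 : (2:ℝ) ^ ((N:ℝ) * (1/p)) ≤ M' / c := by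
            have h6 : (N:ℝ) ≤ p * Real.logb 2 (M' / c) := Int.floor_le _
            have h7 : (N:ℝ) * (1/p) ≤ Real.logb 2 (M' / c) := by
              rw [mul_one_div, div_le_iff₀ hp0]; linarith
            calc (2:ℝ) ^ ((N:ℝ) * (1/p)) ≤ (2:ℝ) ^ (Real.logb 2 (M' / c)) :=
                  Real.rpow_le_rpow_of_exponent_le (by norm_num) h7
              _ = M' / c := Real.rpow_logb (by norm_num) (by norm_num) hMc
          have h8 : c * (2:ℝ) ^ ((N:ℝ) * (1/p)) ≤ M' := by
            rw [mul_comm, ← le_div_iff₀ hc]; exact h5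
          calc ENNReal.ofReal (c * (2:ℝ) ^ ((N:ℝ) * (1/p))) ≤ ENNReal.ofReal M' :=
                ENNReal.ofReal_le_ofReal h8
            _ = M := ENNReal.ofReal_toReal hM
  · push_neg at hS
    have : IsEmpty {n : ℤ // c < |a n|} := ⟨fun n => absurd n.2 (not_lt.2 (hS n.1))⟩
    rw [tsum_empty, ENNReal.zero_rpow_of_pos hip, mul_zero]
    exact zero_le

lemma le_weakNormZ (p : ℝ) (a : ℤ → ℝ) {c : ℝ} (hc : 0 < c) :
    ENNReal.ofReal c * (∑' n : {n : ℤ // c < |a n|}, (2:ℝ≥0∞)^(n.1:ℤ)) ^ ((1:ℝ)/p) ≤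
      weakNormZ p a := by
  rw [weakNormZ]
  exact le_iSup₂ (f := fun (c : ℝ) (_ : 0 < c) =>
    ENNReal.ofReal c * (∑' n : {n : ℤ // c < |a n|}, (2:ℝ≥0∞)^(n.1:ℤ)) ^ ((1:ℝ)/p)) c hc

/-- `T((a_n)) = (2^{n/p} a_n)` is a surjective isomorphism from `ℓ^{p,∞}(ℤ,σ)` onto `ℓ^∞(ℤ)`:
`‖Ta‖_∞ ≤ ‖a‖`, `‖a‖ ≤ 2^{1/p} ‖Ta‖_∞`, and every bounded sequence is in the range of `T`. -/
theorem weakZ_iso_linfty (p : ℝ) (hp : 1 < p) :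
    (∀ a : ℤ → ℝ, weakNormZ p a ≠ ⊤ →
      (⨆ n : ℤ, ENNReal.ofReal |(2 : ℝ) ^ ((n : ℝ)/p) * a n|) ≤ weakNormZ p a ∧
      weakNormZ p a ≤
        (2 : ℝ≥0∞) ^ ((1 : ℝ)/p) * ⨆ n : ℤ, ENNReal.ofReal |(2 : ℝ) ^ ((n : ℝ)/p) * a n|) ∧
    (∀ c : ℤ → ℝ, (⨆ n : ℤ, ENNReal.ofReal |c n|) ≠ ⊤ →
      ∃ a : ℤ → ℝ, weakNormZ p a ≠ ⊤ ∧ ∀ n : ℤ, (2 : ℝ) ^ ((n : ℝ)/p) * a n = c n) := by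
  have hp0 : (0:ℝ) < p := lt_trans one_pos hp
  have hip : (0:ℝ) < 1/p := by positivity
  constructor
  · intro a ha
    refine ⟨?_, weakNormZ_upper p hp a⟩
    apply iSup_le; intro n
    by_cases h0 : a n = 0
    · simp [h0]
    apply ENNReal.le_of_forall_pos_le_add
    intro ε hε _
    set t : ℝ := (2:ℝ) ^ ((n:ℝ)/p) with ht
    have htpos : 0 < t := by positivity
    have habs : 0 < |a n| := abs_pos.2 h0
    set δ : ℝ := min ((ε:ℝ) / t) (|a n| / 2) with hδ
    have hδpos : 0 < δ := lt_min (by positivity) (by positivity)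
    have hδle : δ ≤ |a n| / 2 := min_le_right _ _
    set c : ℝ := |a n| - δ with hcdef
    have hcpos : 0 < c := by rw [hcdef]; linarith
    have hclt : c < |a n| := by rw [hcdef]; linarith
    have key : ENNReal.ofReal c * (2:ℝ≥0∞)^((n:ℝ)/p) ≤ weakNormZ p a := by
      have h1 : ((2:ℝ≥0∞)^(n:ℤ)) ≤ ∑' m : {m : ℤ // c < |a m|}, (2:ℝ≥0∞)^(m.1:ℤ) :=
        ENNReal.le_tsum (⟨n, hclt⟩ : {m : ℤ // c < |a m|})
    -- compare rpow
      have h2 : (2:ℝ≥0∞)^((n:ℝ)/p) ≤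
          (∑' m : {m : ℤ // c < |a m|}, (2:ℝ≥0∞)^(m.1:ℤ)) ^ ((1:ℝ)/p) := by
        calc (2:ℝ≥0∞)^((n:ℝ)/p) = ((2:ℝ≥0∞)^(n:ℤ))^((1:ℝ)/p) := by
              rw [← ENNReal.rpow_intCast 2 n, ← ENNReal.rpow_mul, mul_one_div]
          _ ≤ _ := ENNReal.rpow_le_rpow h1 hip.le
      calc ENNReal.ofReal c * (2:ℝ≥0∞)^((n:ℝ)/p)
          ≤ ENNReal.ofReal c *
            (∑' m : {m : ℤ // c < |a m|}, (2:ℝ≥0∞)^(m.1:ℤ)) ^ ((1:ℝ)/p) :=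
            mul_le_mul_right h2 _
        _ ≤ weakNormZ p a := le_weakNormZ p a hcpos
    have hsplit : ENNReal.ofReal |(2 : ℝ) ^ ((n : ℝ)/p) * a n| ≤
        ENNReal.ofReal c * (2:ℝ≥0∞)^((n:ℝ)/p) + ε := by
      have e1 : |t * a n| = c * t + δ * t := by
        rw [abs_mul, abs_of_pos htpos, hcdef]; ring
      calc ENNReal.ofReal |t * a n| = ENNReal.ofReal (c * t + δ * t) := by rw [e1]
        _ ≤ ENNReal.ofReal (c * t) + ENNReal.ofReal (δ * t) := ENNReal.ofReal_add_le
        _ ≤ ENNReal.ofReal c * (2:ℝ≥0∞)^((n:ℝ)/p) + ε := by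
            apply add_le_add
            · rw [ENNReal.ofReal_mul hcpos.le, two_rpow_eq]
            · have hδt : δ * t ≤ (ε:ℝ) := by
                have : δ ≤ (ε:ℝ) / t := min_le_left _ _
                calc δ * t ≤ ((ε:ℝ) / t) * t := by nlinarith
                  _ = (ε:ℝ) := by field_simp
              calc ENNReal.ofReal (δ * t) ≤ ENNReal.ofReal (ε:ℝ) :=
                    ENNReal.ofReal_le_ofReal hδt
                _ = (ε : ℝ≥0∞) := ENNReal.ofReal_coe_nnreal
    exact hsplit.trans (add_le_add_left key _)
  · intro c hcbd
    have heq : ∀ n : ℤ, (2:ℝ)^((n:ℝ)/p) * (c n / (2:ℝ)^((n:ℝ)/p)) = c n := by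
      intro n
      have : (2:ℝ)^((n:ℝ)/p) ≠ 0 := by positivity
      field_simp
    refine ⟨fun n => c n / (2:ℝ)^((n:ℝ)/p), ?_, heq⟩
    have hub := weakNormZ_upper p hp (fun n => c n / (2:ℝ)^((n:ℝ)/p))
    simp_rw [heq] at hub
    apply ne_top_of_le_ne_top _ hub
    exact ENNReal.mul_ne_top (ENNReal.rpow_ne_top_of_nonneg hip.le ofNat_ne_top) hcbd
end

section
/- Let D = {(i,j) ∈ ℕ×ℕ : i ≥ j ≥ 1} and let (b_i) be a strictly positive sequence with (i+1)·b_{i+1} ≤ b_i for all i. If B ⊆ D is a finite nonempty set with B_i := B ∩ ({i}×{1,...,i}), and i_1 is the smallest index with B_{i_1} ≠ ∅, then ∑_i b_i |B_i| ≤ 3 b_{i_1} |B_{i_1}|. -/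
open Finset

private lemma tail_sum_aux (b : ℕ → ℝ) (hb : ∀ i, 0 < b i)
    (hdec : ∀ i : ℕ, ((i : ℝ) + 1) * b (i + 1) ≤ b i) :
    ∀ n j, 1 ≤ j → ∑ k ∈ range n, b (j + 1 + k) * ((j + 1 + k : ℕ) : ℝ) ≤ 2 * b j := by
  intro n
  induction n with
  | zero => intro j hj; simp; linarith [hb j]
  | succ n ih =>
    intro j hj
    rw [Finset.sum_range_succ']
    have h1 : ∑ k ∈ range n, b (j + 1 + (k + 1)) * ((j + 1 + (k + 1) : ℕ) : ℝ)
        ≤ 2 * b (j + 1) := by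
      have heq : ∑ k ∈ range n, b (j + 1 + (k + 1)) * ((j + 1 + (k + 1) : ℕ) : ℝ)
          = ∑ k ∈ range n, b ((j + 1) + 1 + k) * (((j + 1) + 1 + k : ℕ) : ℝ) := by
        apply Finset.sum_congr rfl
        intro k _
        have e : j + 1 + (k + 1) = (j + 1) + 1 + k := by omega
        rw [e]
      rw [heq]
      exact ih (j + 1) (by omega)
    have h2 : ((j + 1 : ℕ) : ℝ) * b (j + 1) ≤ b j := by
      have := hdec j; push_cast; push_cast at this; linarith
    have h3 : 2 * b (j + 1) ≤ ((j + 1 : ℕ) : ℝ) * b (j + 1) := by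
      have : (2 : ℝ) ≤ ((j + 1 : ℕ) : ℝ) := by exact_mod_cast by omega
      nlinarith [(hb (j + 1))]
    have h4 : b (j + 1 + 0) * ((j + 1 + 0 : ℕ) : ℝ) = ((j + 1 : ℕ) : ℝ) * b (j + 1) := by
      norm_num [mul_comm]
    linarith

/-- If `(i+1) b_{i+1} ≤ b_i` with `b_i > 0`, `B` is a finite nonempty subset of
`D = {(i,j) : 1 ≤ j ≤ i}`, and `i₁` is the smallest index whose row `B_{i₁}` is nonempty,
then `∑_i b_i |B_i| ≤ 3 b_{i₁} |B_{i₁}|`. -/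
theorem row_sum_le_three_first_row (b : ℕ → ℝ) (hb : ∀ i, 0 < b i)
    (hdec : ∀ i : ℕ, ((i : ℝ) + 1) * b (i + 1) ≤ b i)
    (B : Finset (ℕ × ℕ)) (hB : ∀ q ∈ B, 1 ≤ q.2 ∧ q.2 ≤ q.1) (hne : B.Nonempty)
    (i₁ : ℕ) (hi₁ : (B.filter fun q => q.1 = i₁).Nonempty)
    (hmin : ∀ i < i₁, (B.filter fun q => q.1 = i) = ∅) :
    ∑ q ∈ B, b q.1 ≤ 3 * b i₁ * ((B.filter fun q => q.1 = i₁).card : ℝ) := by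
  obtain ⟨q₀, hq₀⟩ := hi₁
  simp only [mem_filter] at hq₀
  have hq₀B := hB q₀ hq₀.1
  have hi₁pos : 1 ≤ i₁ := by omega
  set N := B.sup Prod.fst + 1 with hN
  have hmaps : ∀ q ∈ B, q.1 ∈ range N := by
    intro q hq
    simp only [hN, mem_range, Nat.lt_succ_iff]
    exact le_sup (f := Prod.fst) hq
  have hi₁N : i₁ < N := by
    have := hmaps q₀ hq₀.1
    rw [hq₀.2] at this
    simpa using this
  have hsum : ∑ q ∈ B, b q.1
      = ∑ i ∈ range N, ∑ q ∈ B.filter (fun q => q.1 = i), b q.1 :=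
    (Finset.sum_fiberwise_of_maps_to hmaps _).symm
  have hinner : ∀ i, ∑ q ∈ B.filter (fun q => q.1 = i), b q.1
      = b i * ((B.filter fun q => q.1 = i).card : ℝ) := by
    intro i
    rw [Finset.sum_congr rfl (fun q hq => ?_), Finset.sum_const, nsmul_eq_mul, mul_comm]
    simp only [mem_filter] at hq
    rw [hq.2]
  have hcard : ∀ i, ((B.filter fun q => q.1 = i).card : ℝ) ≤ (i : ℝ) := by
    intro i
    have h : (B.filter fun q => q.1 = i).card ≤ (Finset.Icc 1 i).card := by
      apply Finset.card_le_card_of_injOn Prod.snd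
      · intro q hq
        simp only [Finset.mem_coe, mem_filter] at hq
        have := hB q hq.1
        simp only [Finset.mem_coe, Finset.mem_Icc]
        omega
      · intro q hq r hr h2
        simp only [coe_filter, Set.mem_setOf_eq] at hq hr
        exact Prod.ext (hq.2.trans hr.2.symm) h2
    have : ((B.filter fun q => q.1 = i).card : ℝ) ≤ ((Finset.Icc 1 i).card : ℝ) :=
      Nat.cast_le.mpr h
    simpa [Nat.card_Icc] using this
  set c : ℝ := ((B.filter fun q => q.1 = i₁).card : ℝ) with hc
  have hc1 : 1 ≤ c := by
    have : 0 < (B.filter fun q => q.1 = i₁).card :=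
      Finset.card_pos.mpr ⟨q₀, by simp [mem_filter, hq₀.1, hq₀.2]⟩
    rw [hc]; exact_mod_cast this
  rw [hsum, Finset.range_eq_Ico,
    ← Finset.sum_Ico_consecutive _ (Nat.zero_le i₁) hi₁N.le,
    Finset.sum_eq_sum_Ico_succ_bot hi₁N]
  have hz : ∑ i ∈ Finset.Ico 0 i₁, ∑ q ∈ B.filter (fun q => q.1 = i), b q.1 = 0 := by
    apply Finset.sum_eq_zero
    intro i hi
    rw [hmin i (by simpa using hi)]
    simp
  rw [hz, hinner i₁, ← hc]
  have htail : ∑ i ∈ Finset.Ico (i₁ + 1) N, ∑ q ∈ B.filter (fun q => q.1 = i), b q.1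
      ≤ 2 * b i₁ := by
    calc ∑ i ∈ Finset.Ico (i₁ + 1) N, ∑ q ∈ B.filter (fun q => q.1 = i), b q.1
        ≤ ∑ i ∈ Finset.Ico (i₁ + 1) N, b i * (i : ℝ) := by
          apply Finset.sum_le_sum
          intro i hi
          rw [hinner i]
          exact mul_le_mul_of_nonneg_left (hcard i) (hb i).le
      _ = ∑ k ∈ range (N - (i₁ + 1)), b (i₁ + 1 + k) * ((i₁ + 1 + k : ℕ) : ℝ) := by
          rw [Finset.sum_Ico_eq_sum_range]
      _ ≤ 2 * b i₁ := tail_sum_aux b hb hdec _ i₁ hi₁pos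
  have hbpos := hb i₁
  nlinarith [htail, hbpos, hc1]
end

section
/- Let D = {(i,j) : i ≥ j ≥ 1} with weight α(i,j) = b_i where (b_i) is strictly positive and satisfies either (i+1)b_{i+1} ≤ b_i for all i, or b_{i+1} ≥ (i+1)b_i for all i. Then the map T : ℓ^{p,∞}(D,α) → (∑ ⊕ ℓ^{p,∞}(i))_{ℓ^∞} given by (Tx)_i(j) = b_i^{1/p} x(i,j) is a surjective isomorphism. -/
open ENNReal

/-- The triangular set `D = {(i,j) : 1 ≤ j ≤ i}`. -/
def Tri : Type := {q : ℕ × ℕ // 1 ≤ q.2 ∧ q.2 ≤ q.1}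

/-- Weak `ℓ^p` quasi-norm on `D` with weight `α(i,j) = b_i`. -/
noncomputable def weakNormD (p : ℝ) (b : ℕ → ℝ) (x : Tri → ℝ) : ℝ≥0∞ :=
  ⨆ (c : ℝ) (_ : 0 < c),
    ENNReal.ofReal c *
      (∑' q : {q : Tri // c < |x q|}, ENNReal.ofReal (b q.1.1.1)) ^ ((1 : ℝ)/p)

/-- The norm of `(∑ ⊕ ℓ^{p,∞}(i))_{ℓ^∞}`: the sup over rows `i` of the weak `ℓ^p`
(counting-measure) norm of the `i`-th row. -/
noncomputable def supRowNorm (p : ℝ) (y : Tri → ℝ) : ℝ≥0∞ :=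
  ⨆ i : ℕ, ⨆ (c : ℝ) (_ : 0 < c),
    ENNReal.ofReal c *
      (∑' _ : {q : Tri // q.1.1 = i ∧ c < |y q|}, (1 : ℝ≥0∞)) ^ ((1 : ℝ)/p)

lemma myGeoSum : ∑' k:ℕ, (2⁻¹:ℝ≥0∞)^k = 2 := by
  rw [ENNReal.tsum_geometric, ENNReal.one_sub_inv_two, inv_inv]

lemma myOfRealHalf (y : ℝ) (hy : 0 ≤ y) (m : ℕ) :
    ENNReal.ofReal (y * (1/2)^m) = ENNReal.ofReal y * (2⁻¹:ℝ≥0∞)^m := by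
  rw [ENNReal.ofReal_mul hy, ENNReal.ofReal_pow (by norm_num)]
  congr 1
  rw [show (1/2:ℝ) = 2⁻¹ by norm_num, ENNReal.ofReal_inv_of_pos (by norm_num), ENNReal.ofReal_ofNat]

open Classical in
lemma mySplit (f : ℕ → ℝ≥0∞) (k : ℕ) :
    ∑' i, f i = ∑ i ∈ Finset.range k, f i + ∑' i, f (i + k) := by
  have h1 : ∀ i, f i = (if i < k then f i else 0) + (if k ≤ i then f i else 0) := by
    intro i
    by_cases h : i < k
    · simp [h, Nat.not_le.mpr h]
    · simp [h, Nat.not_lt.mp h]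
  calc ∑' i, f i = ∑' i, ((if i < k then f i else 0) + (if k ≤ i then f i else 0)) :=
        tsum_congr h1
    _ = (∑' i, if i < k then f i else 0) + ∑' i, if k ≤ i then f i else 0 := ENNReal.tsum_add
    _ = ∑ i ∈ Finset.range k, f i + ∑' i, f (i + k) := by
      congr 1
      · rw [tsum_eq_sum (s := Finset.range k)
          (fun i hi => by simp [Finset.mem_range] at hi; simp [Nat.not_lt.mpr hi])]
        exact Finset.sum_congr rfl fun i hi => by simp [Finset.mem_range.mp hi]
      · rw [← Function.Injective.tsum_eq (g := fun i : ℕ => i + k)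
          (fun a b h => by simpa using h) (f := fun i => if k ≤ i then f i else 0)
          (fun i hi => by
            simp only [Function.mem_support, ne_eq, ite_eq_right_iff, not_forall] at hi
            obtain ⟨h, -⟩ := hi
            exact ⟨i - k, by simp; omega⟩)]
        exact tsum_congr fun i => by simp

set_option maxHeartbeats 1000000 in
lemma myKey (b : ℕ → ℝ) (hb : ∀ i, 0 < b i)
    (hcond : (∀ i : ℕ, ((i : ℝ) + 1) * b (i + 1) ≤ b i) ∨
      (∀ i : ℕ, ((i : ℝ) + 1) * b i ≤ b (i + 1)))
    (N : ℕ → ℝ≥0∞) (hN : ∀ i, N i ≤ (i : ℝ≥0∞)) (hN01 : ∀ i, N i = 0 ∨ 1 ≤ N i)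
    (A : ℝ≥0∞) (hA : A ≠ ⊤) (hle : ∀ i, ENNReal.ofReal (b i) * N i ≤ A) :
    ∑' i, ENNReal.ofReal (b i) * N i ≤ 3 * A := by
  set f : ℕ → ℝ≥0∞ := fun i => ENNReal.ofReal (b i) * N i with hf
  have hN0 : N 0 = 0 := le_antisymm (by simpa using hN 0) zero_le
  have hfz : ∀ i, N i = 0 → f i = 0 := fun i h => by simp [hf, h]
  have hf1 : ∀ i, N i ≠ 0 → ENNReal.ofReal (b i) ≤ A := by
    intro i h
    rcases hN01 i with h0 | h1
    · exact absurd h0 h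
    · calc ENNReal.ofReal (b i) = ENNReal.ofReal (b i) * 1 := (mul_one _).symm
        _ ≤ ENNReal.ofReal (b i) * N i := by gcongr
        _ ≤ A := hle i
  have hfiA : ∀ i, f i ≤ A := hle
  have hfnat : ∀ i : ℕ, f i ≤ ENNReal.ofReal ((i:ℝ) * b i) := by
    intro i
    calc f i ≤ ENNReal.ofReal (b i) * (i:ℝ≥0∞) := mul_le_mul_right (hN i) _
      _ = ENNReal.ofReal ((i:ℝ) * b i) := by
          rw [show ((i:ℕ):ℝ≥0∞) = ENNReal.ofReal ((i:ℕ):ℝ) from (ENNReal.ofReal_natCast i).symm,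
            ← ENNReal.ofReal_mul (hb i).le, mul_comm]
  by_cases hS : ∀ i, N i = 0
  · simp [hf, hS]
  push_neg at hS
  have h3A : A + 2 * A = 3 * A := by ring
  rcases hcond with hdec | hinc
  · classical
    obtain ⟨i₀, hi₀, hmin⟩ : ∃ i₀, N i₀ ≠ 0 ∧ ∀ i < i₀, N i = 0 :=
      ⟨Nat.find hS, Nat.find_spec hS, fun i hi => by
        by_contra h; exact Nat.find_min hS hi h⟩
    have hi₀1 : 1 ≤ i₀ := by
      rcases Nat.eq_zero_or_pos i₀ with h | h
      · exact absurd (h ▸ hN0) hi₀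
      · exact h
    have hgeo : ∀ k, b (i₀ + k) ≤ b i₀ * (1/2)^k := by
      intro k; induction k with
      | zero => simp
      | succ k ih =>
        have h1 := hdec (i₀ + k)
        have hc : (1:ℝ) ≤ ((i₀ + k : ℕ) : ℝ) := by
          exact_mod_cast le_trans hi₀1 (Nat.le_add_right _ _)
        have h2 : (2:ℝ) * b (i₀ + k + 1) ≤ (((i₀ + k : ℕ):ℝ) + 1) * b (i₀ + k + 1) := by
          nlinarith [hb (i₀ + k + 1)]
        have h4 : b (i₀ + (k+1)) ≤ b (i₀ + k) / 2 := by
          rw [show i₀ + (k+1) = i₀ + k + 1 from rfl]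
          linarith
        calc b (i₀ + (k+1)) ≤ b (i₀+k)/2 := h4
          _ ≤ (b i₀ * (1/2)^k)/2 := by linarith
          _ = b i₀ * (1/2)^(k+1) := by ring
    have hstep : ∀ m, f (m + 1) ≤ ENNReal.ofReal (b m) := by
      intro m
      refine (hfnat (m+1)).trans (ENNReal.ofReal_le_ofReal ?_)
      have h1 := hdec m
      push_cast
      linarith
    have htail : ∑' k, f (k + (i₀ + 1)) ≤ 2 * A := by
      have hterm : ∀ k, f (k + (i₀ + 1)) ≤ ENNReal.ofReal (b i₀) * 2⁻¹^k := by
        intro k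
        rw [show k + (i₀ + 1) = (i₀ + k) + 1 from by omega]
        refine (hstep (i₀ + k)).trans ?_
        rw [← myOfRealHalf (b i₀) (hb i₀).le k]
        exact ENNReal.ofReal_le_ofReal (hgeo k)
      calc ∑' k, f (k + (i₀+1)) ≤ ∑' k, ENNReal.ofReal (b i₀) * 2⁻¹^k :=
            ENNReal.tsum_le_tsum hterm
        _ = ENNReal.ofReal (b i₀) * 2 := by rw [ENNReal.tsum_mul_left, myGeoSum]
        _ ≤ A * 2 := by gcongr; exact hf1 i₀ hi₀
        _ = 2 * A := mul_comm _ _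
    have hhead : ∑ i ∈ Finset.range (i₀ + 1), f i ≤ A := by
      have he : ∑ i ∈ Finset.range (i₀ + 1), f i = f i₀ := by
        rw [Finset.sum_range_succ]
        rw [Finset.sum_eq_zero fun i hi => hfz i (hmin i (Finset.mem_range.mp hi)), zero_add]
      rw [he]; exact hfiA i₀
    calc ∑' i, f i = ∑ i ∈ Finset.range (i₀+1), f i + ∑' k, f (k + (i₀+1)) :=
        mySplit f (i₀+1)
      _ ≤ A + 2*A := add_le_add hhead htail
      _ = 3*A := h3A
  · have hmono : Monotone b := by
      apply monotone_nat_of_le_succ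
      intro n
      have h0 : (0:ℝ) ≤ (n:ℝ) := Nat.cast_nonneg n
      nlinarith [hinc n, hb n]
    have hgrow : ∀ i, 1 ≤ i → ∀ k, b i * 2^k ≤ b (i + k) := by
      intro i hi k; induction k with
      | zero => simp
      | succ k ih =>
        have h1 := hinc (i + k)
        have hc : (1:ℝ) ≤ ((i + k : ℕ):ℝ) := by
          exact_mod_cast le_trans hi (Nat.le_add_right _ _)
        have h3 : 2 * b (i+k) ≤ b (i+k+1) := by nlinarith [hb (i+k)]
        calc b i * 2^(k+1) = 2 * (b i * 2^k) := by ring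
          _ ≤ 2 * b (i+k) := by linarith
          _ ≤ b (i + (k+1)) := h3
    have hbound : ∃ K, ∀ i, K ≤ i → N i = 0 := by
      obtain ⟨k, hk⟩ := pow_unbounded_of_one_lt (A.toReal / b 1) (by norm_num : (1:ℝ) < 2)
      refine ⟨1 + k, fun i hi => ?_⟩
      by_contra h
      have h1 : b i ≤ A.toReal := by
        have := hf1 i h
        rwa [ENNReal.ofReal_le_iff_le_toReal hA] at this
      have h2 : b (1 + k) ≤ b i := hmono hi
      have h3 : b 1 * 2^k ≤ b (1+k) := hgrow 1 le_rfl k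
      have h4 : A.toReal < b 1 * 2^k := by
        rw [div_lt_iff₀ (hb 1)] at hk
        linarith [mul_comm (b 1) ((2:ℝ)^k)]
      linarith
    obtain ⟨K, hK⟩ := hbound
    have hbdd : BddAbove {i | N i ≠ 0} :=
      ⟨K, fun i hi => le_of_lt (lt_of_not_ge fun hc => hi (hK i hc))⟩
    set i₁ := sSup {i | N i ≠ 0} with hi₁def
    have hi₁mem : N i₁ ≠ 0 := Nat.sSup_mem hS hbdd
    have hmax : ∀ i, i₁ < i → N i = 0 := fun i hi => by
      by_contra h
      exact absurd (le_csSup hbdd h) (not_le.mpr hi)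
    have hstep2 : ∀ m, f m ≤ ENNReal.ofReal (b (m+1)) := by
      intro m
      refine (hfnat m).trans (ENNReal.ofReal_le_ofReal ?_)
      have h1 := hinc m
      have h0 : (0:ℝ) ≤ (m:ℝ) := Nat.cast_nonneg m
      nlinarith [hb m]
    have hup : ∀ i < i₁, ENNReal.ofReal (b (i+1)) ≤ ENNReal.ofReal (b i₁) * 2⁻¹^(i₁ - 1 - i) := by
      intro i hi
      set m := i₁ - 1 - i with hm
      have hmi : (i+1) + m = i₁ := by omega
      have h1 : b (i+1) * 2^m ≤ b i₁ := by
        have := hgrow (i+1) (Nat.le_add_left 1 i) m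
        rwa [hmi] at this
      have h2 : b (i+1) ≤ b i₁ * (1/2)^m := by
        have hp : (0:ℝ) < 2^m := by positivity
        rw [show b i₁ * (1/2:ℝ)^m = b i₁ / 2^m from by rw [div_pow, one_pow]; ring,
          le_div_iff₀ hp]
        exact h1
      calc ENNReal.ofReal (b (i+1)) ≤ ENNReal.ofReal (b i₁ * (1/2)^m) :=
            ENNReal.ofReal_le_ofReal h2
        _ = ENNReal.ofReal (b i₁) * 2⁻¹^m := myOfRealHalf _ (hb _).le m
    have hhead2 : ∑ i ∈ Finset.range i₁, f i ≤ 2 * A := by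
      calc ∑ i ∈ Finset.range i₁, f i
          ≤ ∑ i ∈ Finset.range i₁, ENNReal.ofReal (b i₁) * 2⁻¹^(i₁ - 1 - i) :=
            Finset.sum_le_sum fun i hi =>
              (hstep2 i).trans (hup i (Finset.mem_range.mp hi))
        _ = ∑ i ∈ Finset.range i₁, ENNReal.ofReal (b i₁) * 2⁻¹^i :=
            Finset.sum_range_reflect (fun i => ENNReal.ofReal (b i₁) * 2⁻¹^i) i₁
        _ ≤ ∑' i, ENNReal.ofReal (b i₁) * 2⁻¹^i := ENNReal.sum_le_tsum _
        _ = ENNReal.ofReal (b i₁) * 2 := by rw [ENNReal.tsum_mul_left, myGeoSum]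
        _ ≤ A * 2 := by gcongr; exact hf1 i₁ hi₁mem
        _ = 2 * A := mul_comm _ _
    have htail2 : ∑' k, f (k + (i₁ + 1)) = 0 := by
      have hz : ∀ k:ℕ, f (k + (i₁+1)) = 0 := fun k => hfz _ (hmax _ (by omega))
      calc ∑' k, f (k + (i₁+1)) = ∑' _:ℕ, (0:ℝ≥0∞) := tsum_congr hz
        _ = 0 := tsum_zero
    calc ∑' i, f i = ∑ i ∈ Finset.range (i₁+1), f i + ∑' k, f (k + (i₁+1)) :=
        mySplit f (i₁+1)
      _ = ∑ i ∈ Finset.range i₁, f i + f i₁ := by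
          rw [Finset.sum_range_succ, htail2, add_zero]
      _ ≤ 2*A + A := add_le_add hhead2 (hfiA i₁)
      _ = 3*A := by ring



lemma myCountCongr (P Q : Tri → Prop) (h : ∀ q, P q ↔ Q q) :
    (∑' _ : {q : Tri // P q}, (1:ℝ≥0∞)) = ∑' _ : {q : Tri // Q q}, (1:ℝ≥0∞) := by
  obtain rfl : P = Q := funext fun q => propext (h q)
  rfl

lemma myZeroOne (T : Type*) : (∑' _ : T, (1:ℝ≥0∞)) = 0 ∨ 1 ≤ ∑' _ : T, (1:ℝ≥0∞) := by
  rcases isEmpty_or_nonempty T with h | h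
  · left
    rw [tsum_eq_sum (s := (∅ : Finset T)) (fun b _ => (h.false b).elim)]
    simp
  · right
    exact ENNReal.le_tsum h.some

lemma myRowLe (P : Tri → Prop) (i : ℕ) :
    (∑' _ : {q : Tri // q.1.1 = i ∧ P q}, (1:ℝ≥0∞)) ≤ (i:ℝ≥0∞) := by
  set emb : {q : Tri // q.1.1 = i ∧ P q} → Fin i := fun q => ⟨q.1.1.2 - 1, by
    have h1 : 1 ≤ q.1.1.2 := q.1.2.1
    have h2 : q.1.1.2 ≤ q.1.1.1 := q.1.2.2
    have h3 : q.1.1.1 = i := q.2.1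
    omega⟩ with hemb
  have hinj : Function.Injective emb := by
    intro q r h
    have hval : q.1.1.2 - 1 = r.1.1.2 - 1 := congrArg Fin.val h
    have h1 : 1 ≤ q.1.1.2 := q.1.2.1
    have h2 : 1 ≤ r.1.1.2 := r.1.2.1
    have hj : q.1.1.2 = r.1.1.2 := by omega
    have hi' : q.1.1.1 = r.1.1.1 := by rw [q.2.1, r.2.1]
    apply Subtype.ext
    apply Subtype.ext
    exact Prod.ext hi' hj
  calc (∑' _ : {q : Tri // q.1.1 = i ∧ P q}, (1:ℝ≥0∞))
      = ∑' q : {q : Tri // q.1.1 = i ∧ P q}, (fun _ : Fin i => (1:ℝ≥0∞)) (emb q) := rfl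
    _ ≤ ∑' _ : Fin i, (1:ℝ≥0∞) := ENNReal.tsum_comp_le_tsum_of_injective hinj _
    _ = (i:ℝ≥0∞) := by simp [tsum_fintype]
open Classical in
lemma myTsumSub (P : Tri → Prop) (g : Tri → ℝ≥0∞) :
    ∑' q : {q : Tri // P q}, g q.1 = ∑' q : Tri, if P q then g q else 0 := by
  rw [show (∑' q : {q : Tri // P q}, g q.1) = ∑' q : ({q : Tri | P q} : Set Tri), g q.1 from rfl,
    tsum_subtype]
  exact tsum_congr fun q => by simp [Set.indicator_apply]

open Classical in
open Classical in
lemma myTsumSubOne (P : Tri → Prop) :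
    ∑' _ : {q : Tri // P q}, (1:ℝ≥0∞) = ∑' q : Tri, if P q then 1 else 0 :=
  myTsumSub P (fun _ => 1)

open Classical in
open Classical in
lemma myDecomp (b : ℕ → ℝ) (c : ℝ) (x : Tri → ℝ) :
    (∑' q : {q : Tri // c < |x q|}, ENNReal.ofReal (b q.1.1.1)) =
    ∑' i : ℕ, ENNReal.ofReal (b i) * ∑' _ : {q : Tri // q.1.1 = i ∧ c < |x q|}, (1:ℝ≥0∞) := by
  rw [myTsumSub (fun q => c < |x q|) (fun q => ENNReal.ofReal (b q.1.1))]
  have h1 : ∀ i, ENNReal.ofReal (b i) * ∑' _ : {q : Tri // q.1.1 = i ∧ c < |x q|}, (1:ℝ≥0∞)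
      = ∑' q : Tri, if q.1.1 = i ∧ c < |x q| then ENNReal.ofReal (b i) else 0 := by
    intro i
    rw [myTsumSubOne (fun q => q.1.1 = i ∧ c < |x q|), ← ENNReal.tsum_mul_left]
    exact tsum_congr fun q => by by_cases h : q.1.1 = i ∧ c < |x q| <;> simp [h]
  simp_rw [h1]
  rw [ENNReal.tsum_comm]
  refine tsum_congr fun q => ?_
  rw [tsum_eq_single q.1.1 (by
    intro i hi
    simp only [ite_eq_right_iff, and_imp]
    intro h _; exact absurd h.symm hi)]
  by_cases h : c < |x q| <;> simp [h]

lemma myPart1 (p : ℝ) (hp : 1 < p) (b : ℕ → ℝ) (hb : ∀ i, 0 < b i) (x : Tri → ℝ) :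
    supRowNorm p (fun q => b q.1.1 ^ ((1 : ℝ)/p) * x q) ≤ weakNormD p b x := by
  have hp0 : (0:ℝ) < p := lt_trans one_pos hp
  have he : (0:ℝ) < 1/p := by positivity
  have hbe : ∀ i, (0:ℝ) < b i ^ ((1:ℝ)/p) := fun i => Real.rpow_pos_of_pos (hb i) _
  rw [supRowNorm]
  refine iSup_le fun i => iSup_le fun c => iSup_le fun hc => ?_
  set c' := c / b i ^ ((1:ℝ)/p) with hc'def
  have hc' : 0 < c' := div_pos hc (hbe i)
  have hcount : (∑' _ : {q : Tri // q.1.1 = i ∧ c < |b q.1.1 ^ ((1:ℝ)/p) * x q|}, (1:ℝ≥0∞))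
      = ∑' _ : {q : Tri // q.1.1 = i ∧ c' < |x q|}, (1:ℝ≥0∞) := by
    refine myCountCongr _ _ fun q => ?_
    constructor
    · rintro ⟨hqi, hlt⟩
      refine ⟨hqi, ?_⟩
      rw [hqi, abs_mul, abs_of_pos (hbe i)] at hlt
      rw [hc'def, div_lt_iff₀ (hbe i), mul_comm]
      exact hlt
    · rintro ⟨hqi, hlt⟩
      refine ⟨hqi, ?_⟩
      rw [hc'def, div_lt_iff₀ (hbe i), mul_comm] at hlt
      rw [hqi, abs_mul, abs_of_pos (hbe i)]
      exact hlt
  rw [hcount]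
  set Ni := ∑' _ : {q : Tri // q.1.1 = i ∧ c' < |x q|}, (1:ℝ≥0∞) with hNi
  have halg : ENNReal.ofReal c * Ni ^ ((1:ℝ)/p)
      = ENNReal.ofReal c' * (ENNReal.ofReal (b i) * Ni) ^ ((1:ℝ)/p) := by
    rw [ENNReal.mul_rpow_of_nonneg _ _ he.le, ← mul_assoc]
    congr 1
    rw [ENNReal.ofReal_rpow_of_pos (hb i), ← ENNReal.ofReal_mul hc'.le]
    congr 1
    rw [hc'def, div_mul_cancel₀ _ (hbe i).ne']
  rw [halg]
  have hterm : ENNReal.ofReal (b i) * Ni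
      ≤ ∑' q : {q : Tri // c' < |x q|}, ENNReal.ofReal (b q.1.1.1) := by
    rw [myDecomp b c' x]
    exact ENNReal.le_tsum i
  calc ENNReal.ofReal c' * (ENNReal.ofReal (b i) * Ni) ^ ((1:ℝ)/p)
      ≤ ENNReal.ofReal c' *
        (∑' q : {q : Tri // c' < |x q|}, ENNReal.ofReal (b q.1.1.1)) ^ ((1:ℝ)/p) := by
        gcongr
    _ ≤ weakNormD p b x := by
        rw [weakNormD]
        exact le_iSup₂ (f := fun (c : ℝ) (_ : 0 < c) => ENNReal.ofReal c *
          (∑' q : {q : Tri // c < |x q|}, ENNReal.ofReal (b q.1.1.1)) ^ ((1:ℝ)/p)) c' hc'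



lemma myPart2 (p : ℝ) (hp : 1 < p) (b : ℕ → ℝ) (hb : ∀ i, 0 < b i)
    (hcond : (∀ i : ℕ, ((i : ℝ) + 1) * b (i + 1) ≤ b i) ∨
      (∀ i : ℕ, ((i : ℝ) + 1) * b i ≤ b (i + 1)))
    (hkey : ∀ (N : ℕ → ℝ≥0∞), (∀ i, N i ≤ (i : ℝ≥0∞)) → (∀ i, N i = 0 ∨ 1 ≤ N i) →
      ∀ (A : ℝ≥0∞), A ≠ ⊤ → (∀ i, ENNReal.ofReal (b i) * N i ≤ A) →
      ∑' i, ENNReal.ofReal (b i) * N i ≤ 3 * A)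
    (x : Tri → ℝ) :
    weakNormD p b x ≤
      (3 : ℝ≥0∞) ^ ((1 : ℝ)/p) * supRowNorm p (fun q => b q.1.1 ^ ((1 : ℝ)/p) * x q) := by
  have hp0 : (0:ℝ) < p := lt_trans one_pos hp
  have he : (0:ℝ) < 1/p := by positivity
  have hbe : ∀ i, (0:ℝ) < b i ^ ((1:ℝ)/p) := fun i => Real.rpow_pos_of_pos (hb i) _
  set y : Tri → ℝ := fun q => b q.1.1 ^ ((1:ℝ)/p) * x q with hy
  set M := supRowNorm p y with hM
  by_cases hMtop : M = ⊤
  · rw [hMtop, ENNReal.mul_top]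
    · exact le_top
    · exact (ENNReal.rpow_pos (by norm_num) (by norm_num)).ne'
  rw [weakNormD]
  refine iSup_le fun c => iSup_le fun hc => ?_
  rw [myDecomp b c x]
  set N : ℕ → ℝ≥0∞ := fun i => ∑' _ : {q : Tri // q.1.1 = i ∧ c < |x q|}, (1:ℝ≥0∞) with hN
  have hcM : ∀ i, ENNReal.ofReal c * (ENNReal.ofReal (b i) * N i) ^ ((1:ℝ)/p) ≤ M := by
    intro i
    have hci : 0 < c * b i ^ ((1:ℝ)/p) := mul_pos hc (hbe i)
    have hcount : (∑' _ : {q : Tri // q.1.1 = i ∧ c * b i ^ ((1:ℝ)/p) < |y q|}, (1:ℝ≥0∞))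
        = N i := by
      refine myCountCongr _ _ fun q => ?_
      constructor
      · rintro ⟨hqi, hlt⟩
        refine ⟨hqi, ?_⟩
        rw [hy] at hlt
        simp only at hlt
        rw [hqi, abs_mul, abs_of_pos (hbe i)] at hlt
        rw [mul_comm] at hlt
        exact lt_of_mul_lt_mul_left hlt (hbe i).le
      · rintro ⟨hqi, hlt⟩
        refine ⟨hqi, ?_⟩
        rw [hy]
        simp only
        rw [hqi, abs_mul, abs_of_pos (hbe i)]
        rw [mul_comm c]
        exact (mul_lt_mul_iff_right₀ (hbe i)).mpr hlt
    have h1 : ENNReal.ofReal (c * b i ^ ((1:ℝ)/p)) * (N i) ^ ((1:ℝ)/p) ≤ M := by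
      rw [← hcount, hM, supRowNorm]
      refine le_iSup_of_le i ?_
      exact le_iSup₂ (f := fun (c : ℝ) (_ : 0 < c) => ENNReal.ofReal c *
        (∑' _ : {q : Tri // q.1.1 = i ∧ c < |y q|}, (1:ℝ≥0∞)) ^ ((1:ℝ)/p))
        (c * b i ^ ((1:ℝ)/p)) hci
    calc ENNReal.ofReal c * (ENNReal.ofReal (b i) * N i) ^ ((1:ℝ)/p)
        = ENNReal.ofReal (c * b i ^ ((1:ℝ)/p)) * (N i) ^ ((1:ℝ)/p) := by
          rw [ENNReal.mul_rpow_of_nonneg _ _ he.le, ← mul_assoc]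
          congr 1
          rw [ENNReal.ofReal_mul hc.le, ENNReal.ofReal_rpow_of_pos (hb i)]
      _ ≤ M := h1
  set A := (M / ENNReal.ofReal c) ^ p with hA
  have hcne : ENNReal.ofReal c ≠ 0 := (ENNReal.ofReal_pos.mpr hc).ne'
  have hAtop : A ≠ ⊤ := by
    apply ENNReal.rpow_ne_top_of_nonneg hp0.le
    exact (ENNReal.div_lt_top hMtop hcne).ne
  have hAi : ∀ i, ENNReal.ofReal (b i) * N i ≤ A := by
    intro i
    have h2 : (ENNReal.ofReal (b i) * N i) ^ ((1:ℝ)/p) ≤ M / ENNReal.ofReal c := by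
      rw [ENNReal.le_div_iff_mul_le (Or.inl hcne) (Or.inl ENNReal.ofReal_ne_top), mul_comm]
      exact hcM i
    have h3 := ENNReal.rpow_le_rpow h2 hp0.le
    rwa [← ENNReal.rpow_mul, one_div_mul_cancel hp0.ne', ENNReal.rpow_one] at h3
  have hsum : ∑' i, ENNReal.ofReal (b i) * N i ≤ 3 * A :=
    hkey N (fun i => myRowLe _ i) (fun i => myZeroOne _) A hAtop hAi
  calc ENNReal.ofReal c * (∑' i, ENNReal.ofReal (b i) * N i) ^ ((1:ℝ)/p)
      ≤ ENNReal.ofReal c * (3 * A) ^ ((1:ℝ)/p) := by gcongr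
    _ = (3:ℝ≥0∞) ^ ((1:ℝ)/p) * (ENNReal.ofReal c * A ^ ((1:ℝ)/p)) := by
        rw [ENNReal.mul_rpow_of_nonneg _ _ he.le]; ring
    _ = (3:ℝ≥0∞) ^ ((1:ℝ)/p) * (ENNReal.ofReal c * (M / ENNReal.ofReal c)) := by
        rw [hA, ← ENNReal.rpow_mul, mul_one_div_cancel hp0.ne', ENNReal.rpow_one]
    _ = (3:ℝ≥0∞) ^ ((1:ℝ)/p) * M := by
        rw [mul_comm (ENNReal.ofReal c), ENNReal.div_mul_cancel hcne ENNReal.ofReal_ne_top]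


/-- If `(b_i)` is strictly positive and either `(i+1) b_{i+1} ≤ b_i` for all `i`, or
`b_{i+1} ≥ (i+1) b_i` for all `i`, then `(Tx)(i,j) = b_i^{1/p} x(i,j)` defines a surjective
isomorphism of `ℓ^{p,∞}(D,α)` onto `(∑ ⊕ ℓ^{p,∞}(i))_{ℓ^∞}`, with `‖Tx‖ ≤ ‖x‖ ≤ 3^{1/p} ‖Tx‖`. -/
theorem weakD_iso_supRow (p : ℝ) (hp : 1 < p) (b : ℕ → ℝ) (hb : ∀ i, 0 < b i)
    (hcond : (∀ i : ℕ, ((i : ℝ) + 1) * b (i + 1) ≤ b i) ∨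
      (∀ i : ℕ, ((i : ℝ) + 1) * b i ≤ b (i + 1))) :
    (∀ x : Tri → ℝ,
      supRowNorm p (fun q => b q.1.1 ^ ((1 : ℝ)/p) * x q) ≤ weakNormD p b x ∧
      weakNormD p b x ≤
        (3 : ℝ≥0∞) ^ ((1 : ℝ)/p) * supRowNorm p (fun q => b q.1.1 ^ ((1 : ℝ)/p) * x q)) ∧
    ∀ y : Tri → ℝ, supRowNorm p y ≠ ⊤ →
      ∃ x : Tri → ℝ, weakNormD p b x ≠ ⊤ ∧
        (fun q => b q.1.1 ^ ((1 : ℝ)/p) * x q) = y := by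
  have hkey : ∀ (N : ℕ → ℝ≥0∞), (∀ i, N i ≤ (i : ℝ≥0∞)) → (∀ i, N i = 0 ∨ 1 ≤ N i) →
      ∀ (A : ℝ≥0∞), A ≠ ⊤ → (∀ i, ENNReal.ofReal (b i) * N i ≤ A) →
      ∑' i, ENNReal.ofReal (b i) * N i ≤ 3 * A :=
    fun N hN hN01 A hA hle => myKey b hb hcond N hN hN01 A hA hle
  have hp0 : (0:ℝ) < p := lt_trans one_pos hp
  have hbe : ∀ i, (0:ℝ) < b i ^ ((1:ℝ)/p) := fun i => Real.rpow_pos_of_pos (hb i) _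
  refine ⟨fun x => ⟨myPart1 p hp b hb x, myPart2 p hp b hb hcond hkey x⟩, fun y hy => ?_⟩
  have heq : (fun q : Tri => b q.1.1 ^ ((1:ℝ)/p) * (y q / b q.1.1 ^ ((1:ℝ)/p))) = y :=
    funext fun q => by rw [mul_comm, div_mul_cancel₀ _ (hbe q.1.1).ne']
  refine ⟨fun q => y q / b q.1.1 ^ ((1:ℝ)/p), ?_, heq⟩
  have h2 := myPart2 p hp b hb hcond hkey (fun q => y q / b q.1.1 ^ ((1:ℝ)/p))
  rw [heq] at h2
  intro hT
  rw [hT] at h2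
  have hfin : (3:ℝ≥0∞) ^ ((1:ℝ)/p) * supRowNorm p y ≠ ⊤ :=
    ENNReal.mul_ne_top (ENNReal.rpow_ne_top_of_nonneg (by positivity) (by norm_num)) hy
  exact hfin (top_le_iff.mp h2)
end

section
/- Counting lemma: Let Γ be a set, w : Γ → (0,∞) a weight, A ⊆ ℓ^{p,∞}(Γ,w) and Γ_1 ⊆ Γ with |A| > max(|Γ_1|, ℵ_0). Suppose there exist K < ∞ and r > 1 such that ‖∑_{x∈F} ε_x x‖ ≤ K |F|^{1/r} for all finite F ⊆ A and all signs ε_x = ±1. Then there exists A_1 ⊆ A with |A_1| = |A| and x·χ_{Γ_1} = 0 for every x ∈ A_1. -/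
open ENNReal

/-- The weak `ℓ^p` quasi-norm on a weighted set. -/
noncomputable def weakNorm {Γ : Type*} (p : ℝ) (w : Γ → ℝ) (x : Γ → ℝ) : ℝ≥0∞ :=
  ⨆ (c : ℝ) (_ : 0 < c),
    ENNReal.ofReal c * (∑' γ : {γ : Γ // c < |x γ|}, ENNReal.ofReal (w γ.1)) ^ ((1 : ℝ)/p)

private lemma weakNorm_lower {Γ : Type*} (p : ℝ) (hp01 : 0 ≤ (1:ℝ)/p) (w : Γ → ℝ)
    (y : Γ → ℝ) (γ₀ : Γ) (c : ℝ) (hc : 0 < c) (h : c < |y γ₀|) :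
    ENNReal.ofReal c * (ENNReal.ofReal (w γ₀)) ^ ((1:ℝ)/p) ≤ weakNorm p w y := by
  have h1 : ENNReal.ofReal (w γ₀) ≤ ∑' γ : {γ : Γ // c < |y γ|}, ENNReal.ofReal (w γ.1) :=
    ENNReal.le_tsum (⟨γ₀, h⟩ : {γ : Γ // c < |y γ|})
  unfold weakNorm
  refine le_iSup₂_of_le c hc ?_
  exact mul_le_mul_right (ENNReal.rpow_le_rpow h1 hp01) _

private lemma bad_finite {Γ : Type*} (p : ℝ) (hp : 1 < p) (w : Γ → ℝ) (hw : ∀ γ, 0 < w γ)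
    (A : Set (Γ → ℝ)) (K r : ℝ) (hr : 1 < r)
    (hbound : ∀ F : Finset (Γ → ℝ), ↑F ⊆ A → ∀ ε : (Γ → ℝ) → ℝ,
      (∀ x ∈ F, ε x = 1 ∨ ε x = -1) →
      weakNorm p w (∑ x ∈ F, ε x • x) ≤ ENNReal.ofReal (K * (F.card : ℝ) ^ ((1 : ℝ)/r)))
    (γ₀ : Γ) (n : ℕ) :
    {x | x ∈ A ∧ (1:ℝ)/(n+1) < |x γ₀|}.Finite := by
  by_contra hinf
  have hinf : {x | x ∈ A ∧ (1:ℝ)/(n+1) < |x γ₀|}.Infinite := hinf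
  have hd : (0:ℝ) < w γ₀ ^ ((1:ℝ)/p) := Real.rpow_pos_of_pos (hw γ₀) _
  set C : ℝ := (2*((n:ℝ)+1)*K) / (w γ₀ ^ ((1:ℝ)/p)) with hC
  have ha : (0:ℝ) < 1 - 1/r := by
    have : 1/r < 1 := by rw [div_lt_one (by linarith)]; linarith
    linarith
  have hT : Filter.Tendsto (fun m : ℕ => (m:ℝ) ^ (1 - (1:ℝ)/r)) Filter.atTop Filter.atTop :=
    (tendsto_rpow_atTop ha).comp tendsto_natCast_atTop_atTop
  obtain ⟨m, hmC, hm1⟩ := ((hT.eventually_gt_atTop C).and (Filter.eventually_ge_atTop 1)).exists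
  obtain ⟨F, hFS, hFcard⟩ := hinf.exists_subset_card_eq m
  have hm0 : (0:ℝ) < m := by exact_mod_cast Nat.lt_of_lt_of_le Nat.zero_lt_one hm1
  set ε : (Γ → ℝ) → ℝ := fun x => if 0 ≤ x γ₀ then 1 else -1 with hε
  have hsigns : ∀ x ∈ F, ε x = 1 ∨ ε x = -1 := by
    intro x _
    by_cases h : 0 ≤ x γ₀
    · left; simp [hε, h]
    · right; simp [hε, h]
  have hFA : ↑F ⊆ A := fun x hx => (hFS hx).1
  have key := hbound F hFA ε hsigns
  set y := ∑ x ∈ F, ε x • x with hy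
  have hys : y γ₀ = ∑ x ∈ F, |x γ₀| := by
    rw [hy, Finset.sum_apply]
    refine Finset.sum_congr rfl fun x _ => ?_
    simp only [Pi.smul_apply, smul_eq_mul, hε]
    by_cases h : 0 ≤ x γ₀
    · rw [if_pos h, abs_of_nonneg h, one_mul]
    · rw [if_neg h, abs_of_neg (not_le.mp h)]; ring
  have hylow : (m:ℝ) * ((1:ℝ)/(n+1)) ≤ y γ₀ := by
    rw [hys]
    calc (m:ℝ) * ((1:ℝ)/(n+1)) = F.card • ((1:ℝ)/(n+1)) := by
          rw [nsmul_eq_mul, hFcard]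
      _ ≤ ∑ x ∈ F, |x γ₀| :=
          Finset.card_nsmul_le_sum F _ _ (fun x hx => (hFS hx).2.le)
  set c : ℝ := (m:ℝ) / (2*((n:ℝ)+1)) with hcdef
  have hn1 : (0:ℝ) < (n:ℝ) + 1 := by positivity
  have hc : 0 < c := by positivity
  have hcy : c < |y γ₀| := by
    have : c < (m:ℝ) * ((1:ℝ)/(n+1)) := by
      rw [hcdef, mul_one_div]
      exact div_lt_div_of_pos_left hm0 hn1 (by linarith)
    exact lt_of_lt_of_le this (hylow.trans (le_abs_self _))
  have hlow := weakNorm_lower p (by positivity) w y γ₀ c hc hcy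
  have hchain : ENNReal.ofReal (c * w γ₀ ^ ((1:ℝ)/p)) ≤
      ENNReal.ofReal (K * (m:ℝ) ^ ((1:ℝ)/r)) := by
    rw [ENNReal.ofReal_mul hc.le, ← ENNReal.ofReal_rpow_of_pos (hw γ₀)]
    calc _ ≤ weakNorm p w y := hlow
      _ ≤ _ := by rw [← hFcard]; exact key
  have hpos : (0:ℝ) < c * w γ₀ ^ ((1:ℝ)/p) := by positivity
  have hKm : 0 ≤ K * (m:ℝ) ^ ((1:ℝ)/r) := by
    by_contra h
    push_neg at h
    rw [ENNReal.ofReal_eq_zero.mpr h.le, le_zero_iff, ENNReal.ofReal_eq_zero] at hchain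
    linarith
  have hreal : c * w γ₀ ^ ((1:ℝ)/p) ≤ K * (m:ℝ) ^ ((1:ℝ)/r) :=
    (ENNReal.ofReal_le_ofReal_iff hKm).mp hchain
  set t : ℝ := (m:ℝ) ^ ((1:ℝ)/r) with htdef
  have ht : 0 < t := Real.rpow_pos_of_pos hm0 _
  have hmeq : (m:ℝ) = (m:ℝ) ^ (1 - (1:ℝ)/r) * t := by
    rw [htdef, ← Real.rpow_add hm0]
    norm_num
  have h1 : (m:ℝ) * w γ₀ ^ ((1:ℝ)/p) ≤ K * t * (2*((n:ℝ)+1)) := by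
    rw [hcdef, div_mul_eq_mul_div, div_le_iff₀ (by positivity)] at hreal
    exact hreal
  rw [hmeq] at h1
  have h2 : 2*((n:ℝ)+1)*K < (m:ℝ) ^ (1 - (1:ℝ)/r) * (w γ₀ ^ ((1:ℝ)/p)) :=
    (div_lt_iff₀ hd).mp hmC
  have h3 := mul_lt_mul_of_pos_right h2 ht
  nlinarith [h1, h3]

/-- Counting lemma: if `A ⊆ ℓ^{p,∞}(Γ,w)` with `|A| > max(|Γ₁|, ℵ₀)` and all signed sums over
finite subsets of `A` are bounded by `K |F|^{1/r}` with `r > 1`, then some `A₁ ⊆ A` of full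
cardinality consists of functions vanishing on `Γ₁`. -/
theorem counting_lemma {Γ : Type*} (p : ℝ) (hp : 1 < p) (w : Γ → ℝ) (hw : ∀ γ, 0 < w γ)
    (A : Set (Γ → ℝ)) (Γ₁ : Set Γ)
    (hA : ∀ x ∈ A, weakNorm p w x ≠ ⊤)
    (hcard : max (Cardinal.mk Γ₁) Cardinal.aleph0 < Cardinal.mk A)
    (K r : ℝ) (hr : 1 < r)
    (hbound : ∀ F : Finset (Γ → ℝ), ↑F ⊆ A → ∀ ε : (Γ → ℝ) → ℝ,
      (∀ x ∈ F, ε x = 1 ∨ ε x = -1) →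
      weakNorm p w (∑ x ∈ F, ε x • x) ≤ ENNReal.ofReal (K * (F.card : ℝ) ^ ((1 : ℝ)/r))) :
    ∃ A₁ ⊆ A, Cardinal.mk A₁ = Cardinal.mk A ∧ ∀ x ∈ A₁, ∀ γ ∈ Γ₁, x γ = 0 := by
  classical
  set Bad : Set (Γ → ℝ) := {x | x ∈ A ∧ ∃ γ ∈ Γ₁, x γ ≠ 0} with hBad
  set T : Γ₁ → Set (Γ → ℝ) := fun γ => ⋃ n : ℕ, {x | x ∈ A ∧ (1:ℝ)/(n+1) < |x γ.1|} with hTdef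
  have hTc : ∀ γ : Γ₁, (T γ).Countable :=
    fun γ => Set.countable_iUnion (fun n => (bad_finite p hp w hw A K r hr hbound γ.1 n).countable)
  have hBadsub : Bad ⊆ ⋃ γ : Γ₁, T γ := by
    rintro x ⟨hxA, γ, hγ, hxγ⟩
    obtain ⟨n, hn⟩ := exists_nat_one_div_lt (abs_pos.mpr hxγ)
    exact Set.mem_iUnion.mpr ⟨⟨γ, hγ⟩, Set.mem_iUnion.mpr ⟨n, hxA, hn⟩⟩
  have hBadcard : Cardinal.mk Bad < Cardinal.mk A := by
    calc Cardinal.mk Bad ≤ Cardinal.mk (⋃ γ : Γ₁, T γ) := Cardinal.mk_le_mk_of_subset hBadsub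
      _ ≤ Cardinal.mk Γ₁ * ⨆ γ : Γ₁, Cardinal.mk (T γ) := Cardinal.mk_iUnion_le T
      _ ≤ Cardinal.mk Γ₁ * Cardinal.aleph0 := by
          refine mul_le_mul' le_rfl (ciSup_le' fun γ => ?_)
          exact (Cardinal.mk_le_aleph0_iff.mpr (Set.countable_coe_iff.mpr (hTc γ)))
      _ ≤ max (Cardinal.mk Γ₁) Cardinal.aleph0 := by
          calc Cardinal.mk Γ₁ * Cardinal.aleph0
              ≤ max (max (Cardinal.mk Γ₁) Cardinal.aleph0) Cardinal.aleph0 := Cardinal.mul_le_max _ _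
            _ = max (Cardinal.mk Γ₁) Cardinal.aleph0 := by
                rw [max_assoc, max_self]
      _ < Cardinal.mk A := hcard
  refine ⟨A \ Bad, Set.diff_subset, ?_, ?_⟩
  · refine le_antisymm (Cardinal.mk_le_mk_of_subset Set.diff_subset) ?_
    by_contra h
    push_neg at h
    have hsub : A ⊆ (A \ Bad) ∪ Bad := by
      intro x hx
      by_cases hb : x ∈ Bad
      · exact Or.inr hb
      · exact Or.inl ⟨hx, hb⟩
    have haleph : Cardinal.aleph0 ≤ Cardinal.mk A :=
      le_of_lt (lt_of_le_of_lt (le_max_right _ _) hcard)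
    have : Cardinal.mk A ≤ Cardinal.mk ↥(A \ Bad) + Cardinal.mk Bad :=
      (Cardinal.mk_le_mk_of_subset hsub).trans (Cardinal.mk_union_le _ _)
    exact absurd this (not_le.mpr (Cardinal.add_lt_of_lt haleph h hBadcard))
  · rintro x ⟨hxA, hxB⟩ γ hγ
    by_contra hne
    exact hxB ⟨hxA, γ, hγ, hne⟩
end

section
/- If Γ_1, Γ_2 are sets with |Γ_1| > |Γ_2| ≥ ℵ_0 and 1 < p, r < ∞, then ℓ^{p,∞}(Γ_1,w_1) does not embed isomorphically into ℓ^{r,∞}(Γ_2,w_2) for any weights w_1, w_2; in particular the two spaces are not isomorphic whenever |Γ_1| ≠ |Γ_2|. -/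
open ENNReal

/-- Lower bound: a single point gives a lower bound for the weak norm. -/
lemma le_weakNorm {Γ : Type*} (r : ℝ) (hr : 0 < r) (w : Γ → ℝ) (y : Γ → ℝ) {c : ℝ}
    (hc : 0 < c) (δ : Γ) (hδ : c < |y δ|) :
    ENNReal.ofReal c * (ENNReal.ofReal (w δ)) ^ ((1 : ℝ)/r) ≤ weakNorm r w y := by
  refine le_trans ?_ (le_iSup₂ (f := fun (c : ℝ) (_ : 0 < c) =>
    ENNReal.ofReal c * (∑' γ : {γ : Γ // c < |y γ|}, ENNReal.ofReal (w γ.1)) ^ ((1 : ℝ)/r))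
    c hc)
  refine mul_le_mul_right (ENNReal.rpow_le_rpow ?_ (by positivity)) _
  exact ENNReal.le_tsum (⟨δ, hδ⟩ : {γ : Γ // c < |y γ|})

/-- Upper bound for the weak norm of a finitely supported vector. -/
lemma weakNorm_le_of_support {Γ : Type*} (p : ℝ) (hp : 0 < p) (w : Γ → ℝ) (x : Γ → ℝ)
    (t : Finset Γ) (hx : ∀ γ, x γ ≠ 0 → γ ∈ t ∧ w γ ≤ |x γ| ^ (-p)) :
    weakNorm p w x ≤ (t.card : ℝ≥0∞) ^ ((1 : ℝ)/p) := by
  classical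
  refine iSup₂_le fun c hc => ?_
  have hc0 : ENNReal.ofReal c ≠ 0 := by simp [hc, ENNReal.ofReal_pos]
  have key : (∑' γ : {γ : Γ // c < |x γ|}, ENNReal.ofReal (w γ.1))
      ≤ (t.card : ℝ≥0∞) * ENNReal.ofReal (c ^ (-p)) := by
    have hsub : ∀ γ : Γ, c < |x γ| → γ ∈ t ∧ w γ ≤ c ^ (-p) := by
      intro γ hγ
      have hxne : x γ ≠ 0 := by
        intro h0; rw [h0] at hγ; simp at hγ; linarith
      obtain ⟨ht, hw⟩ := hx γ hxne
      refine ⟨ht, hw.trans ?_⟩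
      exact Real.rpow_le_rpow_of_nonpos hc hγ.le (by linarith)
    calc (∑' γ : {γ : Γ // c < |x γ|}, ENNReal.ofReal (w γ.1))
        = ∑' γ : Γ, Set.indicator {γ : Γ | c < |x γ|} (fun γ => ENNReal.ofReal (w γ)) γ := by
          exact tsum_subtype {γ : Γ | c < |x γ|} (fun γ => ENNReal.ofReal (w γ))
      _ ≤ ∑' γ : Γ, Set.indicator (↑t : Set Γ) (fun _ => ENNReal.ofReal (c ^ (-p))) γ := by
          refine ENNReal.tsum_le_tsum fun γ => ?_
          simp only [Set.indicator_apply, Set.mem_setOf_eq, Finset.mem_coe]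
          by_cases hγ : c < |x γ|
          · rw [if_pos hγ, if_pos (hsub γ hγ).1]
            exact ENNReal.ofReal_le_ofReal (hsub γ hγ).2
          · rw [if_neg hγ]; exact zero_le
      _ = ∑ γ ∈ t, ENNReal.ofReal (c ^ (-p)) := by
          rw [tsum_eq_sum (s := t)]
          · refine Finset.sum_congr rfl fun γ hγ => ?_
            simp only [Set.indicator_apply, Finset.mem_coe]
            rw [if_pos hγ]
          · intro γ hγ
            simp only [Set.indicator_apply, Finset.mem_coe]
            rw [if_neg hγ]
      _ = (t.card : ℝ≥0∞) * ENNReal.ofReal (c ^ (-p)) := by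
          rw [Finset.sum_const, nsmul_eq_mul]
  have h1p : (0:ℝ) ≤ 1/p := by positivity
  calc ENNReal.ofReal c * (∑' γ : {γ : Γ // c < |x γ|}, ENNReal.ofReal (w γ.1)) ^ ((1 : ℝ)/p)
      ≤ ENNReal.ofReal c * ((t.card : ℝ≥0∞) * ENNReal.ofReal (c ^ (-p))) ^ ((1 : ℝ)/p) :=
        mul_le_mul_right (ENNReal.rpow_le_rpow key h1p) _
    _ = (t.card : ℝ≥0∞) ^ ((1 : ℝ)/p) := by
        rw [ENNReal.mul_rpow_of_nonneg _ _ h1p, ← ENNReal.ofReal_rpow_of_pos hc,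
          ← ENNReal.rpow_mul]
        have : -p * (1/p) = -1 := by field_simp
        rw [this, ENNReal.rpow_neg_one, mul_comm (ENNReal.ofReal c),
          mul_assoc, ENNReal.inv_mul_cancel hc0 ENNReal.ofReal_ne_top, mul_one]

/-- If the weak norm is positive there is a point where `|y|` exceeds a positive rational. -/
lemma exists_pt_of_weakNorm_pos {Γ : Type*} (r : ℝ) (hr : 0 < r) (w : Γ → ℝ) (y : Γ → ℝ)
    (h : 0 < weakNorm r w y) : ∃ (δ : Γ) (q : ℚ), 0 < (q : ℝ) ∧ (q : ℝ) < |y δ| := by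
  by_contra hcon
  push_neg at hcon
  have hy : ∀ δ, |y δ| ≤ 0 := by
    intro δ
    by_contra h0
    push_neg at h0
    obtain ⟨q, hq0, hq1⟩ := exists_rat_btwn h0
    exact absurd hq1 (not_lt.2 (hcon δ q (by exact_mod_cast hq0)))
  have : weakNorm r w y = 0 := by
    refine le_antisymm (iSup₂_le fun c hc => ?_) (zero_le)
    haveI : IsEmpty {γ : Γ // c < |y γ|} :=
      ⟨fun γ => absurd γ.2 (not_lt.2 ((hy γ.1).trans hc.le))⟩
    rw [tsum_empty, ENNReal.zero_rpow_of_pos (by positivity), mul_zero]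
  rw [this] at h; exact lt_irrefl 0 h

open scoped Classical in
/-- Normalized "basis vector" at `g`. -/
noncomputable def nbv (p : ℝ) {Γ : Type*} (w : Γ → ℝ) (g : Γ) : Γ → ℝ :=
  fun γ' => if γ' = g then (w g) ^ (-(1/p)) else 0

/-- If `|Γ₁| > |Γ₂| ≥ ℵ₀`, then `ℓ^{p,∞}(Γ₁,w₁)` does not embed isomorphically into
`ℓ^{r,∞}(Γ₂,w₂)` for any weights `w₁, w₂`. -/
theorem no_embedding_of_card_gt {Γ₁ Γ₂ : Type u} (p r : ℝ) (hp : 1 < p) (hr : 1 < r)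
    (hinf : Cardinal.aleph0 ≤ Cardinal.mk Γ₂) (hgt : Cardinal.mk Γ₂ < Cardinal.mk Γ₁)
    (w₁ : Γ₁ → ℝ) (hw₁ : ∀ γ, 0 < w₁ γ) (w₂ : Γ₂ → ℝ) (hw₂ : ∀ γ, 0 < w₂ γ) :
    ¬ ∃ (T : (Γ₁ → ℝ) →ₗ[ℝ] (Γ₂ → ℝ)) (ε M : ℝ≥0∞), 0 < ε ∧ M ≠ ⊤ ∧
      ∀ x : Γ₁ → ℝ, weakNorm p w₁ x ≠ ⊤ →
        ε * weakNorm p w₁ x ≤ weakNorm r w₂ (T x) ∧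
        weakNorm r w₂ (T x) ≤ M * weakNorm p w₁ x := by
  classical
  rintro ⟨T, ε, M, hε, hM, hTM⟩
  have hp0 : (0:ℝ) < p := lt_trans one_pos hp
  have hr0 : (0:ℝ) < r := lt_trans one_pos hr
  have ha : ∀ g, 0 < (w₁ g) ^ (-(1/p)) := fun g => Real.rpow_pos_of_pos (hw₁ g) _
  have hnbv_self : ∀ g, nbv p w₁ g g = (w₁ g) ^ (-(1/p)) := by
    intro g; simp [nbv]
  have haw : ∀ g, w₁ g ≤ |(w₁ g) ^ (-(1/p))| ^ (-p) := by
    intro g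
    rw [abs_of_pos (ha g), ← Real.rpow_mul (hw₁ g).le]
    have h1 : (-(1/p)) * (-p) = 1 := by field_simp
    rw [h1, Real.rpow_one]
  -- norm bounds for nbv
  have hnbv_le : ∀ g, weakNorm p w₁ (nbv p w₁ g) ≤ 1 := by
    intro g
    have h := weakNorm_le_of_support p hp0 w₁ (nbv p w₁ g) {g} ?_
    · simpa using h
    · intro γ' hne
      have hmem : γ' = g := by
        by_contra hne'
        exact hne (by simp [nbv, hne'])
      subst hmem
      exact ⟨Finset.mem_singleton_self _, by rw [hnbv_self]; exact haw γ'⟩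
  have hnbv_pos : ∀ g, 0 < weakNorm p w₁ (nbv p w₁ g) := by
    intro g
    have hlow := le_weakNorm p hp0 w₁ (nbv p w₁ g)
      (c := (w₁ g) ^ (-(1/p)) / 2) (half_pos (ha g)) g
      (by rw [hnbv_self, abs_of_pos (ha g)]; exact half_lt_self (ha g))
    refine lt_of_lt_of_le ?_ hlow
    exact ENNReal.mul_pos (ENNReal.ofReal_pos.mpr (half_pos (ha g))).ne'
      (ENNReal.rpow_pos (ENNReal.ofReal_pos.mpr (hw₁ g)) ENNReal.ofReal_ne_top).ne'
  -- each T(nbv g) has positive weak norm, find a witness point and rational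
  have hTpos : ∀ g, 0 < weakNorm r w₂ (T (nbv p w₁ g)) := by
    intro g
    have h := (hTM (nbv p w₁ g) (by
      exact ne_top_of_le_ne_top (by simp) (hnbv_le g))).1
    refine lt_of_lt_of_le ?_ h
    exact ENNReal.mul_pos hε.ne' (hnbv_pos g).ne'
  have hFex : ∀ g : Γ₁, ∃ y : Γ₂ × ℚ, 0 < ((y.2 : ℝ)) ∧ ((y.2 : ℝ)) < |T (nbv p w₁ g) y.1| := by
    intro g
    obtain ⟨δ, q, hq0, hq1⟩ := exists_pt_of_weakNorm_pos r hr0 w₂ _ (hTpos g)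
    exact ⟨(δ, q), hq0, hq1⟩
  choose F hF1 hF2 using hFex
  -- pigeonhole: some fiber of F is infinite
  have hcard : Cardinal.mk (Γ₂ × ℚ) < Cardinal.mk Γ₁ := by
    have h1 : Cardinal.mk (Γ₂ × ℚ) = Cardinal.mk Γ₂ := by
      rw [Cardinal.mk_prod, Cardinal.mk_denumerable ℚ, Cardinal.lift_aleph0, Cardinal.lift_uzero]
      exact Cardinal.mul_aleph0_eq hinf
    rw [h1]; exact hgt
  haveI : Infinite Γ₂ := Cardinal.infinite_iff.mpr hinf
  obtain ⟨y, hy⟩ := Cardinal.exists_infinite_fiber' F hcard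
  set δ : Γ₂ := y.1
  set q : ℚ := y.2
  have hq0 : 0 < (q : ℝ) := by
    obtain ⟨g, hg⟩ := (Set.infinite_coe_iff.mp hy).nonempty
    have hgy : F g = y := hg
    have h := hF1 g
    rw [hgy] at h
    exact h
  -- an injective sequence inside the fiber
  let E : ℕ ↪ ↥(F ⁻¹' {y}) := Infinite.natEmbedding _
  let γf : ℕ → Γ₁ := fun i => (E i).1
  have hγinj : Function.Injective γf := fun i j h => E.injective (Subtype.ext h)
  have hγF : ∀ i, F (γf i) = y := fun i => (E i).2
  have hγq : ∀ i, (q : ℝ) < |T (nbv p w₁ (γf i)) δ| := by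
    intro i
    have h := hF2 (γf i)
    rwa [hγF i] at h
  -- main estimate for each n
  set W : ℝ≥0∞ := (ENNReal.ofReal (w₂ δ)) ^ ((1:ℝ)/r) with hW_def
  have hW_pos : 0 < W :=
    ENNReal.rpow_pos (by simp [ENNReal.ofReal_pos, hw₂ δ]) ENNReal.ofReal_ne_top
  have hW_ne_top : W ≠ ⊤ := ENNReal.rpow_ne_top_of_nonneg (by positivity) ENNReal.ofReal_ne_top
  have key : ∀ n : ℕ, 0 < n →
      (n : ℝ≥0∞) * (ENNReal.ofReal (q : ℝ) * W) ≤ M * (n : ℝ≥0∞) ^ ((1:ℝ)/p) := by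
    intro n hn
    set s : ℕ → ℝ := fun i => if 0 ≤ T (nbv p w₁ (γf i)) δ then (1:ℝ) else -1 with hs_def
    have hs_abs : ∀ i, |s i| = 1 := by
      intro i; rw [hs_def]; dsimp only; split <;> simp
    have hs_mul : ∀ i, s i * T (nbv p w₁ (γf i)) δ = |T (nbv p w₁ (γf i)) δ| := by
      intro i; rw [hs_def]; dsimp only; split
      · rw [one_mul, abs_of_nonneg ‹_›]
      · rw [neg_one_mul, abs_of_neg (lt_of_not_ge ‹_›)]
    set x : Γ₁ → ℝ := ∑ i ∈ Finset.range n, s i • nbv p w₁ (γf i) with hx_def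
    have hx_apply : ∀ γ', x γ' = ∑ i ∈ Finset.range n, s i * nbv p w₁ (γf i) γ' := by
      intro γ'
      rw [hx_def, Finset.sum_apply]
      rfl
    have hx_val : ∀ j ∈ Finset.range n, x (γf j) = s j * (w₁ (γf j)) ^ (-(1/p)) := by
      intro j hj
      rw [hx_apply]
      rw [Finset.sum_eq_single_of_mem j hj]
      · rw [hnbv_self]
      · intro i hi hij
        have : γf j ≠ γf i := fun h => hij (hγinj h).symm
        simp [nbv, this]
    have hx_zero : ∀ γ', γ' ∉ (Finset.range n).image γf → x γ' = 0 := by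
      intro γ' hγ'
      rw [hx_apply]
      refine Finset.sum_eq_zero fun i hi => ?_
      have : γ' ≠ γf i := fun h => hγ' (Finset.mem_image.mpr ⟨i, hi, h.symm⟩)
      simp [nbv, this]
    -- upper bound for ‖x‖
    have hxnorm : weakNorm p w₁ x ≤ (n : ℝ≥0∞) ^ ((1:ℝ)/p) := by
      have h := weakNorm_le_of_support p hp0 w₁ x ((Finset.range n).image γf) ?_
      · refine h.trans (ENNReal.rpow_le_rpow ?_ (by positivity))
        have hcard' : ((Finset.range n).image γf).card ≤ n :=
          le_trans Finset.card_image_le (by simp)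
        exact Nat.cast_le.mpr hcard'
      · intro γ' hne
        have hmem : γ' ∈ (Finset.range n).image γf := by
          by_contra hmem
          exact hne (hx_zero γ' hmem)
        refine ⟨hmem, ?_⟩
        obtain ⟨j, hj, rfl⟩ := Finset.mem_image.mp hmem
        rw [hx_val j hj, abs_mul, hs_abs j, one_mul]
        exact haw (γf j)
    have hxfin : weakNorm p w₁ x ≠ ⊤ :=
      ne_top_of_le_ne_top (ENNReal.rpow_ne_top_of_nonneg (by positivity) (by simp)) hxnorm
    -- lower bound for ‖T x‖
    have hTx_val : (n : ℝ) * (q : ℝ) < |T x δ| := by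
      have hTx : T x δ = ∑ i ∈ Finset.range n, s i * T (nbv p w₁ (γf i)) δ := by
        rw [hx_def, map_sum, Finset.sum_apply]
        congr 1
        ext i
        rw [map_smul]
        rfl
      have hlt : (n : ℝ) * (q : ℝ) < T x δ := by
        rw [hTx]
        have : (n : ℝ) * (q : ℝ) = ∑ _i ∈ Finset.range n, (q : ℝ) := by
          rw [Finset.sum_const, Finset.card_range, nsmul_eq_mul]
        rw [this]
        refine Finset.sum_lt_sum_of_nonempty (Finset.nonempty_range_iff.mpr hn.ne') fun i _ => ?_
        rw [hs_mul i]
        exact hγq i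
      exact hlt.trans_le (le_abs_self _)
    have hnq : (0:ℝ) < (n : ℝ) * (q : ℝ) := by positivity
    have hlow := le_weakNorm r hr0 w₂ (T x) hnq δ hTx_val
    have hup := (hTM x hxfin).2
    calc (n : ℝ≥0∞) * (ENNReal.ofReal (q : ℝ) * W)
        = ENNReal.ofReal ((n : ℝ) * (q : ℝ)) * W := by
          rw [ENNReal.ofReal_mul (by positivity), ENNReal.ofReal_natCast, mul_assoc]
      _ ≤ weakNorm r w₂ (T x) := hlow
      _ ≤ M * weakNorm p w₁ x := hup
      _ ≤ M * (n : ℝ≥0∞) ^ ((1:ℝ)/p) := mul_le_mul_right hxnorm _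
  -- derive the contradiction
  have hKW : (ENNReal.ofReal (q : ℝ) * W).toReal = (q : ℝ) * (w₂ δ) ^ ((1:ℝ)/r) := by
    rw [ENNReal.toReal_mul, ENNReal.toReal_ofReal hq0.le, ← ENNReal.toReal_rpow,
      ENNReal.toReal_ofReal (hw₂ δ).le]
  have hK_pos : (0:ℝ) < (q : ℝ) * (w₂ δ) ^ ((1:ℝ)/r) := by
    have := Real.rpow_pos_of_pos (hw₂ δ) ((1:ℝ)/r)
    positivity
  have hreal : ∀ n : ℕ, 0 < n →
      (n : ℝ) * ((q : ℝ) * (w₂ δ) ^ ((1:ℝ)/r)) ≤ M.toReal * (n : ℝ) ^ ((1:ℝ)/p) := by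
    intro n hn
    have h := key n hn
    have hlhs_ne : (n : ℝ≥0∞) * (ENNReal.ofReal (q : ℝ) * W) ≠ ⊤ :=
      ENNReal.mul_ne_top (by simp) (ENNReal.mul_ne_top ENNReal.ofReal_ne_top hW_ne_top)
    have hrhs_ne : M * (n : ℝ≥0∞) ^ ((1:ℝ)/p) ≠ ⊤ :=
      ENNReal.mul_ne_top hM (ENNReal.rpow_ne_top_of_nonneg (by positivity) (by simp))
    have := (ENNReal.toReal_le_toReal hlhs_ne hrhs_ne).mpr h
    rwa [ENNReal.toReal_mul, ENNReal.toReal_natCast, hKW, ENNReal.toReal_mul,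
      ← ENNReal.toReal_rpow, ENNReal.toReal_natCast] at this
  -- pick n large
  set t : ℝ := 1 - 1/p with ht_def
  have ht_pos : 0 < t := by
    rw [ht_def]
    have : 1/p < 1 := by
      rw [div_lt_one hp0]; exact hp
    linarith
  set B : ℝ := M.toReal / ((q : ℝ) * (w₂ δ) ^ ((1:ℝ)/r)) with hB_def
  have hB_nonneg : 0 ≤ B := div_nonneg ENNReal.toReal_nonneg hK_pos.le
  obtain ⟨n₀, hn₀⟩ := exists_nat_ge ((B + 1) ^ ((1:ℝ)/t))
  set n : ℕ := n₀ + 1 with hn_def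
  have hn : (B + 1) ^ ((1:ℝ)/t) ≤ (n : ℝ) := hn₀.trans (by exact_mod_cast Nat.le_succ n₀)
  have hn_pos : 0 < n := Nat.succ_pos n₀
  have h1 := hreal n hn_pos
  have hnR : (0:ℝ) < (n : ℝ) := by exact_mod_cast hn_pos
  have hrp : (0:ℝ) < (n : ℝ) ^ ((1:ℝ)/p) := Real.rpow_pos_of_pos hnR _
  have hsplit : (n : ℝ) = (n : ℝ) ^ ((1:ℝ)/p) * (n : ℝ) ^ t := by
    rw [← Real.rpow_add hnR, ht_def]
    ring_nf
    rw [Real.rpow_one]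
  have h2 : (n : ℝ) ^ ((1:ℝ)/p) * ((n : ℝ) ^ t * ((q : ℝ) * (w₂ δ) ^ ((1:ℝ)/r)))
      ≤ (n : ℝ) ^ ((1:ℝ)/p) * M.toReal := by
    calc (n : ℝ) ^ ((1:ℝ)/p) * ((n : ℝ) ^ t * ((q : ℝ) * (w₂ δ) ^ ((1:ℝ)/r)))
        = ((n : ℝ) ^ ((1:ℝ)/p) * (n : ℝ) ^ t) * ((q : ℝ) * (w₂ δ) ^ ((1:ℝ)/r)) := by ring
      _ = (n : ℝ) * ((q : ℝ) * (w₂ δ) ^ ((1:ℝ)/r)) := by rw [← hsplit]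
      _ ≤ M.toReal * (n : ℝ) ^ ((1:ℝ)/p) := h1
      _ = (n : ℝ) ^ ((1:ℝ)/p) * M.toReal := mul_comm _ _
  have h3 : (n : ℝ) ^ t * ((q : ℝ) * (w₂ δ) ^ ((1:ℝ)/r)) ≤ M.toReal :=
    le_of_mul_le_mul_left h2 hrp
  have hn_t : (n : ℝ) ^ t ≤ B := by
    rw [hB_def, le_div_iff₀ hK_pos]
    exact h3
  have hn_t' : B + 1 ≤ (n : ℝ) ^ t := by
    have h4 : ((B + 1) ^ ((1:ℝ)/t)) ^ t ≤ (n : ℝ) ^ t :=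
      Real.rpow_le_rpow (Real.rpow_nonneg (by linarith) _) hn ht_pos.le
    rwa [← Real.rpow_mul (by linarith), one_div_mul_cancel ht_pos.ne', Real.rpow_one] at h4
  linarith
end

section
/- If Γ is an uncountable set and 1 < r < p < ∞, then ℓ^{r,∞}(Γ) (counting-measure weak ℓ^r) does not embed isomorphically into ℓ^{p,∞}(Γ,w_1) for any weight w_1 on Γ; hence ℓ^{p,∞}(Γ,w_1) and ℓ^{r,∞}(Γ,w_2) are never isomorphic when p ≠ r. -/
open ENNReal

namespace WeakAux

variable {Γ : Type*}

lemma le_weakNorm (p : ℝ) (w x : Γ → ℝ) {c : ℝ} (hc : 0 < c) :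
    ENNReal.ofReal c * (∑' γ : {γ : Γ // c < |x γ|}, ENNReal.ofReal (w γ.1)) ^ ((1 : ℝ)/p)
      ≤ weakNorm p w x :=
  le_iSup₂ (f := fun c (_ : 0 < c) =>
    ENNReal.ofReal c * (∑' γ : {γ : Γ // c < |x γ|}, ENNReal.ofReal (w γ.1)) ^ ((1 : ℝ)/p)) c hc

lemma countable_levelSet {w : Γ → ℝ} (hw : ∀ t, 0 < w t) {P : Γ → Prop}
    (h : (∑' γ : {γ : Γ // P γ}, ENNReal.ofReal (w γ.1)) ≠ ⊤) : {γ | P γ}.Countable := by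
  have hc := Summable.countable_support_ennreal h
  have huniv : (Function.support fun γ : {γ : Γ // P γ} => ENNReal.ofReal (w γ.1)) = Set.univ := by
    ext γ
    simp [Function.support, (ENNReal.ofReal_pos.2 (hw γ.1)).ne', hw γ.1]
  rw [huniv, Set.countable_univ_iff] at hc
  exact Set.countable_coe_iff.mp hc

lemma levelSet_tsum_ne_top {p : ℝ} (hp : 0 < p) {w x : Γ → ℝ} {M : ℝ≥0∞} (hM : M ≠ ⊤)
    (hx : weakNorm p w x ≤ M) {c : ℝ} (hc : 0 < c) :
    (∑' γ : {γ : Γ // c < |x γ|}, ENNReal.ofReal (w γ.1)) ≠ ⊤ := by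
  intro htop
  have h1 := (le_weakNorm p w x hc).trans hx
  rw [htop, ENNReal.top_rpow_of_pos (by positivity),
    ENNReal.mul_top (by simpa using (ENNReal.ofReal_pos.2 hc).ne')] at h1
  exact hM (top_le_iff.mp h1)

lemma countable_support_of_weakNorm_le {p : ℝ} (hp : 0 < p) {w x : Γ → ℝ} (hw : ∀ t, 0 < w t)
    {M : ℝ≥0∞} (hM : M ≠ ⊤) (hx : weakNorm p w x ≤ M) : {t | x t ≠ 0}.Countable := by
  have heq : {t | x t ≠ 0} = ⋃ n : ℕ, {t | 1/(n+1 : ℝ) < |x t|} := by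
    ext t
    simp only [Set.mem_setOf_eq, Set.mem_iUnion]
    constructor
    · intro h; exact exists_nat_one_div_lt (abs_pos.2 h)
    · rintro ⟨n, hn⟩ h0
      rw [h0, abs_zero] at hn
      have : (0:ℝ) < 1/(n+1:ℝ) := by positivity
      linarith
  rw [heq]
  exact Set.countable_iUnion fun n =>
    countable_levelSet hw (levelSet_tsum_ne_top hp hM hx (by positivity))

lemma weakNorm_sum_le {p : ℝ} (hp : 0 < p) (w₁ : Γ → ℝ) {M : ℝ≥0∞}
    (F : Finset Γ) (f : Γ → Γ → ℝ)
    (hfM : ∀ γ ∈ F, weakNorm p w₁ (f γ) ≤ M)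
    (hdisj : ∀ γ ∈ F, ∀ γ' ∈ F, γ ≠ γ' → ∀ t, f γ t = 0 ∨ f γ' t = 0) :
    weakNorm p w₁ (fun t => ∑ γ ∈ F, f γ t) ≤ M * (F.card : ℝ≥0∞) ^ ((1:ℝ)/p) := by
  refine iSup₂_le fun c hc => ?_
  have hc0 : ENNReal.ofReal c ≠ 0 := by simpa using (ENNReal.ofReal_pos.2 hc).ne'
  have gval : ∀ t γ, γ ∈ F → f γ t ≠ 0 → (∑ γ' ∈ F, f γ' t) = f γ t := by
    intro t γ hγ hne
    refine Finset.sum_eq_single_of_mem γ hγ fun b hb hbγ => ?_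
    rcases hdisj b hb γ hγ hbγ t with h | h
    · exact h
    · exact absurd h hne
  have hset : {t | c < |∑ γ ∈ F, f γ t|} = ⋃ γ ∈ F, {t | c < |f γ t|} := by
    ext t
    simp only [Set.mem_setOf_eq, Set.mem_iUnion, exists_prop]
    constructor
    · intro h
      have hg : (∑ γ ∈ F, f γ t) ≠ 0 := by
        intro h0; rw [h0, abs_zero] at h; linarith
      obtain ⟨γ, hγ, hne⟩ : ∃ γ ∈ F, f γ t ≠ 0 := by
        by_contra hcon; push_neg at hcon
        exact hg (Finset.sum_eq_zero hcon)
      exact ⟨γ, hγ, by rwa [gval t γ hγ hne] at h⟩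
    · rintro ⟨γ, hγ, h⟩
      have hne : f γ t ≠ 0 := by intro h0; rw [h0, abs_zero] at h; linarith
      rw [gval t γ hγ hne]; exact h
  have hpair : (↑F : Set Γ).Pairwise (Function.onFun Disjoint fun γ => {t | c < |f γ t|}) := by
    intro γ hγ γ' hγ' hne
    rw [Function.onFun, Set.disjoint_left]
    intro t h1 h2
    simp only [Set.mem_setOf_eq] at h1 h2
    rcases hdisj γ (Finset.mem_coe.1 hγ) γ' (Finset.mem_coe.1 hγ') hne t with h | h <;>
      [skip; rw [h, abs_zero] at h2] <;> first
      | (rw [h, abs_zero] at h1; linarith)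
      | linarith
  have htsum : (∑' γ_1 : {t : Γ // c < |(fun t => ∑ γ ∈ F, f γ t) t|}, ENNReal.ofReal (w₁ γ_1.1))
      = ∑ γ ∈ F, ∑' t : {t : Γ // c < |f γ t|}, ENNReal.ofReal (w₁ t.1) := by
    have e1 : (∑' γ_1 : {t : Γ // c < |(fun t => ∑ γ ∈ F, f γ t) t|}, ENNReal.ofReal (w₁ γ_1.1))
        = ∑' t : (⋃ γ ∈ F, {t : Γ | c < |f γ t|}), ENNReal.ofReal (w₁ t.1) :=
      tsum_congr_set_coe (fun t => ENNReal.ofReal (w₁ t)) hset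
    rw [e1]
    exact Summable.tsum_finset_bUnion_disjoint (f := fun t => ENNReal.ofReal (w₁ t)) hpair
      (fun i _ => ENNReal.summable)
  rw [htsum]
  have hSγ : ∀ γ ∈ F, (∑' t : {t : Γ // c < |f γ t|}, ENNReal.ofReal (w₁ t.1))
      ≤ (M / ENNReal.ofReal c) ^ p := by
    intro γ hγ
    have h1 : ENNReal.ofReal c *
        (∑' t : {t : Γ // c < |f γ t|}, ENNReal.ofReal (w₁ t.1)) ^ ((1:ℝ)/p) ≤ M :=
      (le_weakNorm p w₁ (f γ) hc).trans (hfM γ hγ)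
    have h2 : (∑' t : {t : Γ // c < |f γ t|}, ENNReal.ofReal (w₁ t.1)) ^ ((1:ℝ)/p)
        ≤ M / ENNReal.ofReal c :=
      (ENNReal.le_div_iff_mul_le (Or.inl hc0) (Or.inl ENNReal.ofReal_ne_top)).2
        (by rwa [mul_comm])
    calc (∑' t : {t : Γ // c < |f γ t|}, ENNReal.ofReal (w₁ t.1))
        = ((∑' t : {t : Γ // c < |f γ t|}, ENNReal.ofReal (w₁ t.1)) ^ ((1:ℝ)/p)) ^ p := by
          rw [← ENNReal.rpow_mul, one_div_mul_cancel hp.ne', ENNReal.rpow_one]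
      _ ≤ (M / ENNReal.ofReal c) ^ p := ENNReal.rpow_le_rpow h2 hp.le
  calc ENNReal.ofReal c * (∑ γ ∈ F, ∑' t : {t : Γ // c < |f γ t|}, ENNReal.ofReal (w₁ t.1))
        ^ ((1:ℝ)/p)
      ≤ ENNReal.ofReal c * ((F.card : ℝ≥0∞) * (M / ENNReal.ofReal c) ^ p) ^ ((1:ℝ)/p) := by
        refine mul_le_mul_right (ENNReal.rpow_le_rpow ?_ (by positivity)) _
        calc (∑ γ ∈ F, ∑' t : {t : Γ // c < |f γ t|}, ENNReal.ofReal (w₁ t.1))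
              ≤ ∑ _γ ∈ F, (M / ENNReal.ofReal c) ^ p := Finset.sum_le_sum hSγ
            _ = (F.card : ℝ≥0∞) * (M / ENNReal.ofReal c) ^ p := by
              rw [Finset.sum_const, nsmul_eq_mul]
    _ = M * (F.card : ℝ≥0∞) ^ ((1:ℝ)/p) := by
        rw [ENNReal.mul_rpow_of_nonneg _ _ (by positivity : (0:ℝ) ≤ 1/p),
          ← ENNReal.rpow_mul, mul_one_div_cancel hp.ne', ENNReal.rpow_one]
        rw [← mul_assoc, mul_comm (ENNReal.ofReal c), mul_assoc,
          ENNReal.mul_div_cancel hc0 ENNReal.ofReal_ne_top, mul_comm]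

lemma no_power_bound (K M : ℝ≥0∞) {u v : ℝ} (hK0 : K ≠ 0) (hK : K ≠ ⊤) (hM : M ≠ ⊤) (hv : 0 ≤ v)
    (huv : v < u) (h : ∀ N : ℕ, 1 ≤ N → K * (N : ℝ≥0∞) ^ u ≤ M * (N : ℝ≥0∞) ^ v) : False := by
  have hs0 : 0 < u - v := sub_pos.2 huv
  have hD : M / K ≠ ⊤ := (ENNReal.div_lt_top hM hK0).ne
  have hD1 : M / K + 1 ≠ ⊤ := by simp [hD]
  obtain ⟨N, hN⟩ := ENNReal.exists_nat_gt
    (ENNReal.rpow_ne_top_of_nonneg (by positivity) hD1 : (M/K+1) ^ (1/(u-v)) ≠ ⊤)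
  set N' : ℕ := max N 1 with hN'def
  have hN'1 : 1 ≤ N' := le_max_right _ _
  have hNN' : ((M/K+1) ^ (1/(u-v)) : ℝ≥0∞) < (N' : ℝ≥0∞) :=
    lt_of_lt_of_le hN (by exact_mod_cast Nat.cast_le.2 (le_max_left N 1))
  have hcast0 : (N' : ℝ≥0∞) ≠ 0 := Nat.cast_ne_zero.2 (by omega)
  have hcastt : (N' : ℝ≥0∞) ≠ ⊤ := natCast_ne_top N'
  have h1 : K * ((N' : ℝ≥0∞) ^ v * (N' : ℝ≥0∞) ^ (u - v)) ≤ M * (N' : ℝ≥0∞) ^ v := by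
    have := h N' hN'1
    rwa [show u = v + (u - v) by ring, ENNReal.rpow_add _ _ hcast0 hcastt] at this
  have hvne : (N' : ℝ≥0∞) ^ v ≠ 0 := by
    simpa using (ENNReal.rpow_pos (pos_iff_ne_zero.2 hcast0) hcastt).ne'
  have hvnt : (N' : ℝ≥0∞) ^ v ≠ ⊤ := ENNReal.rpow_ne_top_of_nonneg hv hcastt
  have h2 : K * (N' : ℝ≥0∞) ^ (u - v) ≤ M :=
    (ENNReal.mul_le_mul_iff_left hvne hvnt).1
      (show (K * (N' : ℝ≥0∞) ^ (u-v)) * (N':ℝ≥0∞) ^ v ≤ M * (N':ℝ≥0∞)^v by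
        calc (K * (N' : ℝ≥0∞) ^ (u-v)) * (N':ℝ≥0∞) ^ v
            = K * ((N' : ℝ≥0∞) ^ v * (N' : ℝ≥0∞) ^ (u - v)) := by ring
          _ ≤ M * (N':ℝ≥0∞)^v := h1)
  have h3 : (N' : ℝ≥0∞) ^ (u - v) ≤ M / K :=
    (ENNReal.le_div_iff_mul_le (Or.inl hK0) (Or.inl hK)).2 (by rwa [mul_comm])
  have h4 : (M/K + 1 : ℝ≥0∞) < (N' : ℝ≥0∞) ^ (u - v) := by
    calc (M/K + 1 : ℝ≥0∞) = ((M/K+1) ^ (1/(u-v))) ^ (u - v) := by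
          rw [← ENNReal.rpow_mul, one_div_mul_cancel hs0.ne', ENNReal.rpow_one]
      _ < (N' : ℝ≥0∞) ^ (u - v) := ENNReal.rpow_lt_rpow hNN' hs0
  exact absurd (lt_of_lt_of_le h4 (h3.trans le_self_add)) (lt_irrefl _)

lemma levelSet_indicator_eq (F : Finset Γ) (s : Γ → ℝ) (hs : ∀ t, s t = 1 ∨ s t = -1)
    {c : ℝ} (hc0 : 0 < c) (hc1 : c < 1) :
    {t | c < |Set.indicator (↑F : Set Γ) s t|} = (↑F : Set Γ) := by
  ext t
  by_cases h : t ∈ F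
  · rcases hs t with h1 | h1 <;>
      simp [Set.indicator_of_mem (Finset.mem_coe.2 h), h, h1, hc1]
  · simp [Set.indicator_of_notMem (fun hh => h (Finset.mem_coe.1 hh)), h, not_lt.2 hc0.le]

lemma levelSet_indicator_empty (F : Finset Γ) (s : Γ → ℝ) (hs : ∀ t, s t = 1 ∨ s t = -1)
    {c : ℝ} (hc1 : 1 ≤ c) :
    {t | c < |Set.indicator (↑F : Set Γ) s t|} = (∅ : Set Γ) := by
  ext t
  simp only [Set.mem_setOf_eq, Set.mem_empty_iff_false, iff_false, not_lt]
  by_cases h : t ∈ F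
  · rcases hs t with h1 | h1 <;> simp [Set.indicator_of_mem (Finset.mem_coe.2 h), h1, hc1]
  · rw [Set.indicator_of_notMem (fun hh => h (Finset.mem_coe.1 hh))]
    simpa using le_trans zero_le_one hc1

lemma weakNorm_indicator_le (r : ℝ) (hr0 : 0 < r) (w : Γ → ℝ) (F : Finset Γ) (s : Γ → ℝ)
    (hs : ∀ t, s t = 1 ∨ s t = -1) :
    weakNorm r w (Set.indicator (↑F : Set Γ) s) ≤ (∑ t ∈ F, ENNReal.ofReal (w t)) ^ ((1:ℝ)/r) := by
  refine iSup₂_le fun c hc => ?_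
  rcases lt_or_ge c 1 with hc1 | hc1
  · have h1 : (∑' γ : {γ : Γ // c < |Set.indicator (↑F : Set Γ) s γ|}, ENNReal.ofReal (w γ.1))
        = ∑ t ∈ F, ENNReal.ofReal (w t) :=
      (tsum_congr_set_coe (fun t => ENNReal.ofReal (w t))
        (levelSet_indicator_eq F s hs hc hc1)).trans (Finset.tsum_subtype' F (fun t => ENNReal.ofReal (w t)))
    rw [h1]
    refine le_trans (mul_le_mul_left (ENNReal.ofReal_le_one.2 hc1.le) _) ?_
    rw [one_mul]
  · have h0 : (∑' γ : {γ : Γ // c < |Set.indicator (↑F : Set Γ) s γ|}, ENNReal.ofReal (w γ.1))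
        = 0 :=
      (tsum_congr_set_coe (fun t => ENNReal.ofReal (w t))
        (levelSet_indicator_empty F s hs hc1)).trans (by simp)
    rw [h0, ENNReal.zero_rpow_of_pos (by positivity), mul_zero]
    exact zero_le'

lemma le_weakNorm_indicator (r : ℝ) (w : Γ → ℝ) (F : Finset Γ) (s : Γ → ℝ)
    (hs : ∀ t, s t = 1 ∨ s t = -1) :
    ENNReal.ofReal (1/2) * (∑ t ∈ F, ENNReal.ofReal (w t)) ^ ((1:ℝ)/r)
      ≤ weakNorm r w (Set.indicator (↑F : Set Γ) s) := by
  have h1 : (∑' γ : {γ : Γ // (1/2:ℝ) < |Set.indicator (↑F : Set Γ) s γ|},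
      ENNReal.ofReal (w γ.1)) = ∑ t ∈ F, ENNReal.ofReal (w t) :=
    (tsum_congr_set_coe (fun t => ENNReal.ofReal (w t))
      (levelSet_indicator_eq F s hs (by norm_num) (by norm_num : (1/2:ℝ) < 1))).trans
      (Finset.tsum_subtype' F (fun t => ENNReal.ofReal (w t)))
  refine le_trans (le_of_eq ?_) (le_weakNorm r w _ (by norm_num : (0:ℝ) < 1/2))
  rw [h1]

lemma exists_uncountable_band {v : Γ → ℝ} (hv : ∀ γ, 0 < v γ)
    (hΓ : ¬ (Set.univ : Set Γ).Countable) :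
    ∃ d : ℝ, 0 < d ∧ ¬ {γ | v γ ∈ Set.Ioc d (2*d)}.Countable := by
  by_contra h; push_neg at h
  apply hΓ
  have hsub : (Set.univ : Set Γ) ⊆ ⋃ n : ℤ, {γ | v γ ∈ Set.Ioc ((2:ℝ)^n) (2*(2:ℝ)^n)} := by
    intro γ _
    obtain ⟨n, hn⟩ := exists_mem_Ioc_zpow (hv γ) (one_lt_two)
    refine Set.mem_iUnion.2 ⟨n, ?_⟩
    rwa [Set.mem_setOf_eq,
      show (2:ℝ)*(2:ℝ)^n = (2:ℝ)^(n+1) by rw [zpow_add_one₀ (two_ne_zero), mul_comm]]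
  exact Set.Countable.mono hsub
    (Set.countable_iUnion fun n => h ((2:ℝ)^n) (zpow_pos two_pos n))

lemma aux (p r : ℝ) (hr : 1 < r) (hrp : r < p)
    (w₁ : Γ → ℝ) (hw₁ : ∀ γ, 0 < w₁ γ) (A : Set Γ) (hA : ¬ A.Countable)
    (f : Γ → Γ → ℝ) (ε M : ℝ≥0∞) (hε : 0 < ε) (hM : M ≠ ⊤)
    (hlow : ∀ F : Finset Γ, ↑F ⊆ A →
      ε * (F.card : ℝ≥0∞) ^ ((1:ℝ)/r) ≤ weakNorm p w₁ (fun t => ∑ γ ∈ F, f γ t))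
    (hup : ∀ (F : Finset Γ) (s : Γ → ℝ), ↑F ⊆ A → (∀ γ, s γ = 1 ∨ s γ = -1) →
      weakNorm p w₁ (fun t => ∑ γ ∈ F, s γ * f γ t) ≤ M * (F.card : ℝ≥0∞) ^ ((1:ℝ)/r)) :
    False := by
  classical
  have hp0 : 0 < p := by linarith
  have hr0 : 0 < r := by linarith
  have hf1 : ∀ γ ∈ A, weakNorm p w₁ (f γ) ≤ M := by
    intro γ hγ
    have h := hup {γ} (fun _ => 1) (by simpa using hγ) (fun _ => Or.inl rfl)
    simpa using h
  have hAne : A.Nonempty := Set.nonempty_iff_ne_empty.2 (fun h => hA (by simp [h]))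
  obtain ⟨γ₀, hγ₀⟩ := hAne
  have hεM : ε ≤ M := by
    have h := hlow {γ₀} (by simpa using hγ₀)
    have h2 : (fun t => ∑ γ ∈ ({γ₀} : Finset Γ), f γ t) = f γ₀ :=
      funext fun t => Finset.sum_singleton _ _
    rw [h2] at h
    simpa using h.trans (hf1 γ₀ hγ₀)
  have hεtop : ε ≠ ⊤ := (lt_of_le_of_lt hεM hM.lt_top).ne
  by_cases hcase : ∃ t₀ : Γ, ∃ κ : ℝ, 0 < κ ∧ {γ | γ ∈ A ∧ κ < |f γ t₀|}.Infinite
  · -- Case A : a point sees infinitely many large values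
    obtain ⟨t₀, κ, hκ, hinf⟩ := hcase
    set W : ℝ≥0∞ := (ENNReal.ofReal (w₁ t₀)) ^ ((1:ℝ)/p) with hWdef
    have hW0 : W ≠ 0 :=
      (ENNReal.rpow_pos (ENNReal.ofReal_pos.2 (hw₁ t₀)) ENNReal.ofReal_ne_top).ne'
    have hWt : W ≠ ⊤ := ENNReal.rpow_ne_top_of_nonneg (by positivity) ENNReal.ofReal_ne_top
    refine no_power_bound (ENNReal.ofReal (κ/2) * W) M (u := (1:ℝ)) (v := 1/r)
      (mul_ne_zero (ENNReal.ofReal_pos.2 (by linarith)).ne' hW0)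
      (ENNReal.mul_ne_top ENNReal.ofReal_ne_top hWt) hM (by positivity)
      (by rw [div_lt_one hr0]; exact hr) ?_
    intro N hN
    obtain ⟨F, hFsub, hFcard⟩ := hinf.exists_subset_card_eq N
    have hFA : ↑F ⊆ A := fun γ hγ => (hFsub hγ).1
    set s : Γ → ℝ := fun γ => if 0 ≤ f γ t₀ then 1 else -1 with hsdef
    have hs : ∀ γ, s γ = 1 ∨ s γ = -1 := fun γ => by
      by_cases h : 0 ≤ f γ t₀ <;> simp [hsdef, h]
    have hval : ∀ γ ∈ F, κ ≤ s γ * f γ t₀ := by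
      intro γ hγ
      have h2 : κ < |f γ t₀| := (hFsub hγ).2
      by_cases h : 0 ≤ f γ t₀
      · simp only [hsdef, if_pos h, one_mul]
        rw [abs_of_nonneg h] at h2
        exact h2.le
      · simp only [hsdef, if_neg h, neg_one_mul]
        rw [abs_of_neg (lt_of_not_ge h)] at h2
        linarith
    have hNpos : (0:ℝ) < N := by exact_mod_cast hN
    have hgt₀ : (N:ℝ) * κ ≤ ∑ γ ∈ F, s γ * f γ t₀ := by
      calc (N:ℝ) * κ = F.card • κ := by rw [hFcard, nsmul_eq_mul]
        _ ≤ ∑ γ ∈ F, s γ * f γ t₀ := Finset.card_nsmul_le_sum F _ κ hval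
    have hNκ : 0 < (N:ℝ)*κ := by positivity
    have hmem : (N:ℝ)*κ/2 < |(fun t => ∑ γ ∈ F, s γ * f γ t) t₀| := by
      simp only []
      rw [abs_of_nonneg (le_trans hNκ.le hgt₀)]
      linarith
    have hlow2 : ENNReal.ofReal ((N:ℝ)*κ/2) * W
        ≤ weakNorm p w₁ (fun t => ∑ γ ∈ F, s γ * f γ t) := by
      refine le_trans ?_ (le_weakNorm p w₁ _ (by positivity : (0:ℝ) < (N:ℝ)*κ/2))
      refine mul_le_mul_right (ENNReal.rpow_le_rpow ?_ (by positivity)) _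
      exact ENNReal.le_tsum (⟨t₀, hmem⟩ : {γ : Γ // (N:ℝ)*κ/2 < |∑ γ' ∈ F, s γ' * f γ' γ|})
    calc (ENNReal.ofReal (κ/2) * W) * (N:ℝ≥0∞)^(1:ℝ)
        = ENNReal.ofReal ((N:ℝ)*κ/2) * W := by
          rw [ENNReal.rpow_one, show (N:ℝ)*κ/2 = (N:ℝ)*(κ/2) by ring,
            ENNReal.ofReal_mul (by positivity), ENNReal.ofReal_natCast]
          ring
      _ ≤ weakNorm p w₁ (fun t => ∑ γ ∈ F, s γ * f γ t) := hlow2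
      _ ≤ M * (F.card:ℝ≥0∞)^((1:ℝ)/r) := hup F s hFA hs
      _ = M * (N:ℝ≥0∞)^((1:ℝ)/r) := by rw [hFcard]
  · -- Case B : all fibers countable, greedy disjointification
    push_neg at hcase
    have hfiber : ∀ t : Γ, {γ | γ ∈ A ∧ f γ t ≠ 0}.Countable := by
      intro t
      have heq : {γ | γ ∈ A ∧ f γ t ≠ 0}
          = ⋃ n : ℕ, {γ | γ ∈ A ∧ 1/(n+1:ℝ) < |f γ t|} := by
        ext γ
        simp only [Set.mem_setOf_eq, Set.mem_iUnion]
        constructor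
        · rintro ⟨h1, h2⟩
          obtain ⟨n, hn⟩ := exists_nat_one_div_lt (abs_pos.2 h2)
          exact ⟨n, h1, hn⟩
        · rintro ⟨n, h1, h2⟩
          refine ⟨h1, fun h0 => ?_⟩
          rw [h0, abs_zero] at h2
          have : (0:ℝ) < 1/(n+1:ℝ) := by positivity
          linarith
      rw [heq]
      exact Set.countable_iUnion fun n =>
        (hcase t (1/(n+1:ℝ)) (by positivity)).countable
    have hsupp : ∀ γ ∈ A, {t | f γ t ≠ 0}.Countable := fun γ hγ =>
      countable_support_of_weakNorm_le hp0 hw₁ hM (hf1 γ hγ)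
    have greedy : ∀ N : ℕ, ∃ F : Finset Γ, ↑F ⊆ A ∧ F.card = N ∧
        ∀ γ ∈ F, ∀ γ' ∈ F, γ ≠ γ' → ∀ t, f γ t = 0 ∨ f γ' t = 0 := by
      intro N
      induction N with
      | zero => exact ⟨∅, by simp, rfl, by simp⟩
      | succ n ih =>
        obtain ⟨F, hFA, hcard, hdisj⟩ := ih
        set bad : Set Γ :=
          ↑F ∪ ⋃ γ' ∈ (↑F : Set Γ), ⋃ t ∈ {t | f γ' t ≠ 0}, {γ | γ ∈ A ∧ f γ t ≠ 0} with hbaddef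
        have hbad : bad.Countable := by
          refine Set.Countable.union F.countable_toSet ?_
          refine Set.Countable.biUnion F.countable_toSet fun γ' hγ' => ?_
          exact Set.Countable.biUnion (hsupp γ' (hFA hγ')) fun t _ => hfiber t
        have hnot : ¬ A ⊆ bad := fun hsub => hA (hbad.mono hsub)
        obtain ⟨γ₁, hγ₁A, hγ₁bad⟩ := Set.not_subset.1 hnot
        have hγ₁F : γ₁ ∉ F := fun h => hγ₁bad (Set.mem_union_left _ (Finset.mem_coe.2 h))
        refine ⟨insert γ₁ F, ?_, ?_, ?_⟩
        · intro x hx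
          rcases Finset.mem_insert.1 (Finset.mem_coe.1 hx) with rfl | h
          · exact hγ₁A
          · exact hFA (Finset.mem_coe.2 h)
        · rw [Finset.card_insert_of_notMem hγ₁F, hcard]
        · have key : ∀ γ' ∈ F, ∀ t, f γ₁ t = 0 ∨ f γ' t = 0 := by
            intro γ' hγ' t
            by_contra hcon
            push_neg at hcon
            refine hγ₁bad (Set.mem_union_right _ ?_)
            refine Set.mem_biUnion (Finset.mem_coe.2 hγ') ?_
            exact Set.mem_biUnion (show t ∈ {t | f γ' t ≠ 0} from hcon.2) ⟨hγ₁A, hcon.1⟩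
          intro γ hγ γ' hγ' hne t
          rcases Finset.mem_insert.1 hγ with rfl | hγF <;>
            rcases Finset.mem_insert.1 hγ' with h' | hγ'F
          · exact absurd h'.symm hne
          · exact key γ' hγ'F t
          · exact h' ▸ (key γ hγF t).symm
          · exact hdisj γ hγF γ' hγ'F hne t
    refine no_power_bound ε M hε.ne' hεtop hM (v := 1/p) (u := 1/r) (by positivity)
      (one_div_lt_one_div_of_lt hr0 hrp) ?_
    intro N hN
    obtain ⟨F, hFA, hcard, hdisj⟩ := greedy N
    calc ε * (N:ℝ≥0∞)^((1:ℝ)/r) = ε * (F.card:ℝ≥0∞)^((1:ℝ)/r) := by rw [hcard]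
      _ ≤ weakNorm p w₁ (fun t => ∑ γ ∈ F, f γ t) := hlow F hFA
      _ ≤ M * (F.card:ℝ≥0∞)^((1:ℝ)/p) :=
          weakNorm_sum_le hp0 w₁ F f (fun γ hγ => hf1 γ (hFA hγ)) hdisj
      _ = M * (N:ℝ≥0∞)^((1:ℝ)/p) := by rw [hcard]

end WeakAux
open WeakAux in
/-- If `Γ` is uncountable and `1 < r < p < ∞`, then the counting-measure weak `ℓ^r` space on
`Γ` does not embed isomorphically into `ℓ^{p,∞}(Γ,w₁)` for any weight `w₁`; hence
`ℓ^{p,∞}(Γ,w₁)` and `ℓ^{r,∞}(Γ,w₂)` are never isomorphic. -/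
theorem no_embedding_of_exponent_lt {Γ : Type*} (p r : ℝ) (hr : 1 < r) (hrp : r < p)
    (hΓ : Cardinal.aleph0 < Cardinal.mk Γ) (w₁ : Γ → ℝ) (hw₁ : ∀ γ, 0 < w₁ γ) :
    (¬ ∃ (T : (Γ → ℝ) →ₗ[ℝ] (Γ → ℝ)) (ε M : ℝ≥0∞), 0 < ε ∧ M ≠ ⊤ ∧
      ∀ x : Γ → ℝ, weakNorm r (fun _ => 1) x ≠ ⊤ →
        ε * weakNorm r (fun _ => 1) x ≤ weakNorm p w₁ (T x) ∧
        weakNorm p w₁ (T x) ≤ M * weakNorm r (fun _ => 1) x) ∧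
    ∀ w₂ : Γ → ℝ, (∀ γ, 0 < w₂ γ) →
      ¬ ∃ (T : (Γ → ℝ) →ₗ[ℝ] (Γ → ℝ)) (ε M : ℝ≥0∞), 0 < ε ∧ M ≠ ⊤ ∧
        (∀ x : Γ → ℝ, weakNorm r w₂ x ≠ ⊤ →
          ε * weakNorm r w₂ x ≤ weakNorm p w₁ (T x) ∧
          weakNorm p w₁ (T x) ≤ M * weakNorm r w₂ x) ∧
        (∀ y : Γ → ℝ, weakNorm p w₁ y ≠ ⊤ →
          ∃ x : Γ → ℝ, weakNorm r w₂ x ≠ ⊤ ∧ T x = y) := by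
  classical
  have hr0 : (0:ℝ) < r := by linarith
  have huncount : ¬ (Set.univ : Set Γ).Countable := by
    rw [Set.countable_univ_iff]
    exact fun h => absurd hΓ (not_lt.2 (Cardinal.mk_le_aleph0_iff.2 h))
  set e : Γ → Γ → ℝ := fun γ t => if t = γ then 1 else 0 with hedef
  have hxF : ∀ (F : Finset Γ) (s : Γ → ℝ),
      (∑ γ ∈ F, s γ • e γ) = Set.indicator (↑F : Set Γ) s := by
    intro F s
    funext t
    simp only [Finset.sum_apply, Pi.smul_apply, smul_eq_mul, hedef]
    by_cases h : t ∈ F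
    · rw [Set.indicator_of_mem (Finset.mem_coe.2 h)]
      rw [Finset.sum_eq_single_of_mem t h (fun b _ hbt => by
        rw [if_neg (fun hh => hbt hh.symm), mul_zero])]
      rw [if_pos rfl, mul_one]
    · rw [Set.indicator_of_notMem (fun hh => h (Finset.mem_coe.1 hh))]
      exact Finset.sum_eq_zero fun b hb => by
        rw [if_neg (fun hh => h (by rw [hh]; exact hb)), mul_zero]
  constructor
  · rintro ⟨T, ε, M, hε, hM, hT⟩
    set f : Γ → Γ → ℝ := fun γ => T (e γ) with hfdef
    have hTsum : ∀ (F : Finset Γ) (s : Γ → ℝ),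
        (T (∑ γ ∈ F, s γ • e γ)) = fun t => ∑ γ ∈ F, s γ * f γ t := by
      intro F s
      funext t
      rw [map_sum, Finset.sum_apply]
      exact Finset.sum_congr rfl fun γ _ => by rw [map_smul]; rfl
    have hnorm_le : ∀ (F : Finset Γ) (s : Γ → ℝ), (∀ t, s t = 1 ∨ s t = -1) →
        weakNorm r (fun _ => 1) (∑ γ ∈ F, s γ • e γ) ≤ (F.card : ℝ≥0∞) ^ ((1:ℝ)/r) := by
      intro F s hs
      rw [hxF F s]
      refine le_trans (weakNorm_indicator_le r hr0 (fun _ => 1) F s hs) (le_of_eq ?_)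
      simp
    have hnorm_ge : ∀ (F : Finset Γ) (s : Γ → ℝ), (∀ t, s t = 1 ∨ s t = -1) →
        ENNReal.ofReal (1/2) * (F.card : ℝ≥0∞) ^ ((1:ℝ)/r)
          ≤ weakNorm r (fun _ => 1) (∑ γ ∈ F, s γ • e γ) := by
      intro F s hs
      rw [hxF F s]
      refine le_trans (le_of_eq ?_) (le_weakNorm_indicator r (fun _ => 1) F s hs)
      simp
    refine aux p r hr hrp w₁ hw₁ Set.univ huncount f (ε * ENNReal.ofReal (1/2)) M
      (ENNReal.mul_pos hε.ne' (ENNReal.ofReal_pos.2 (by norm_num)).ne') hM ?_ ?_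
    · intro F _
      have hs1 : ∀ t : Γ, (fun _ => (1:ℝ)) t = 1 ∨ (fun _ => (1:ℝ)) t = -1 := fun _ => Or.inl rfl
      have hle := hnorm_le F (fun _ => 1) hs1
      have hne : weakNorm r (fun _ => 1) (∑ γ ∈ F, (fun _ => (1:ℝ)) γ • e γ) ≠ ⊤ :=
        ne_top_of_le_ne_top
          (ENNReal.rpow_ne_top_of_nonneg (by positivity) (ENNReal.natCast_ne_top _)) hle
      have hTb := (hT _ hne).1
      have hge := hnorm_ge F (fun _ => 1) hs1
      have heq : T (∑ γ ∈ F, (fun _ => (1:ℝ)) γ • e γ) = fun t => ∑ γ ∈ F, f γ t := by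
        rw [hTsum F (fun _ => 1)]
        funext t
        exact Finset.sum_congr rfl fun γ _ => one_mul _
      calc ε * ENNReal.ofReal (1/2) * (F.card : ℝ≥0∞) ^ ((1:ℝ)/r)
          = ε * (ENNReal.ofReal (1/2) * (F.card : ℝ≥0∞) ^ ((1:ℝ)/r)) := by rw [mul_assoc]
        _ ≤ ε * weakNorm r (fun _ => 1) (∑ γ ∈ F, (fun _ => (1:ℝ)) γ • e γ) :=
            mul_le_mul_right hge ε
        _ ≤ weakNorm p w₁ (T (∑ γ ∈ F, (fun _ => (1:ℝ)) γ • e γ)) := hTb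
        _ = weakNorm p w₁ (fun t => ∑ γ ∈ F, f γ t) := by rw [heq]
    · intro F s _ hs
      have hle := hnorm_le F s hs
      have hne : weakNorm r (fun _ => 1) (∑ γ ∈ F, s γ • e γ) ≠ ⊤ :=
        ne_top_of_le_ne_top
          (ENNReal.rpow_ne_top_of_nonneg (by positivity) (ENNReal.natCast_ne_top _)) hle
      have hTb := (hT _ hne).2
      calc weakNorm p w₁ (fun t => ∑ γ ∈ F, s γ * f γ t)
          = weakNorm p w₁ (T (∑ γ ∈ F, s γ • e γ)) := by rw [hTsum F s]
        _ ≤ M * weakNorm r (fun _ => 1) (∑ γ ∈ F, s γ • e γ) := hTb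
        _ ≤ M * (F.card : ℝ≥0∞) ^ ((1:ℝ)/r) := mul_le_mul_right hle M
  · intro w₂ hw₂
    rintro ⟨T, ε, M, hε, hM, hT, -⟩
    obtain ⟨d, hd, hband⟩ := exists_uncountable_band hw₂ huncount
    set A := {γ | w₂ γ ∈ Set.Ioc d (2*d)} with hAdef
    set f : Γ → Γ → ℝ := fun γ => T (e γ) with hfdef
    have hTsum : ∀ (F : Finset Γ) (s : Γ → ℝ),
        (T (∑ γ ∈ F, s γ • e γ)) = fun t => ∑ γ ∈ F, s γ * f γ t := by
      intro F s
      funext t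
      rw [map_sum, Finset.sum_apply]
      exact Finset.sum_congr rfl fun γ _ => by rw [map_smul]; rfl
    have hsum_le : ∀ F : Finset Γ, ↑F ⊆ A →
        (∑ t ∈ F, ENNReal.ofReal (w₂ t)) ≤ (F.card : ℝ≥0∞) * ENNReal.ofReal (2*d) := by
      intro F hFA
      calc ∑ t ∈ F, ENNReal.ofReal (w₂ t) ≤ ∑ _t ∈ F, ENNReal.ofReal (2*d) :=
            Finset.sum_le_sum fun t ht =>
              ENNReal.ofReal_le_ofReal (hFA (Finset.mem_coe.2 ht)).2
        _ = (F.card : ℝ≥0∞) * ENNReal.ofReal (2*d) := by rw [Finset.sum_const, nsmul_eq_mul]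
    have hsum_ge : ∀ F : Finset Γ, ↑F ⊆ A →
        (F.card : ℝ≥0∞) * ENNReal.ofReal d ≤ ∑ t ∈ F, ENNReal.ofReal (w₂ t) := by
      intro F hFA
      calc (F.card : ℝ≥0∞) * ENNReal.ofReal d = ∑ _t ∈ F, ENNReal.ofReal d := by
            rw [Finset.sum_const, nsmul_eq_mul]
        _ ≤ ∑ t ∈ F, ENNReal.ofReal (w₂ t) :=
            Finset.sum_le_sum fun t ht =>
              ENNReal.ofReal_le_ofReal (hFA (Finset.mem_coe.2 ht)).1.le
    have hnorm_le : ∀ (F : Finset Γ) (s : Γ → ℝ), ↑F ⊆ A → (∀ t, s t = 1 ∨ s t = -1) →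
        weakNorm r w₂ (∑ γ ∈ F, s γ • e γ)
          ≤ (ENNReal.ofReal (2*d)) ^ ((1:ℝ)/r) * (F.card : ℝ≥0∞) ^ ((1:ℝ)/r) := by
      intro F s hFA hs
      rw [hxF F s]
      refine le_trans (weakNorm_indicator_le r hr0 w₂ F s hs) ?_
      rw [← ENNReal.mul_rpow_of_nonneg _ _ (by positivity : (0:ℝ) ≤ 1/r)]
      exact ENNReal.rpow_le_rpow
        (le_trans (hsum_le F hFA) (le_of_eq (mul_comm _ _))) (by positivity)
    have hnorm_ge : ∀ (F : Finset Γ) (s : Γ → ℝ), ↑F ⊆ A → (∀ t, s t = 1 ∨ s t = -1) →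
        ENNReal.ofReal (1/2) * ((ENNReal.ofReal d) ^ ((1:ℝ)/r) * (F.card : ℝ≥0∞) ^ ((1:ℝ)/r))
          ≤ weakNorm r w₂ (∑ γ ∈ F, s γ • e γ) := by
      intro F s hFA hs
      rw [hxF F s]
      refine le_trans (mul_le_mul_right ?_ _) (le_weakNorm_indicator r w₂ F s hs)
      rw [← ENNReal.mul_rpow_of_nonneg _ _ (by positivity : (0:ℝ) ≤ 1/r)]
      exact ENNReal.rpow_le_rpow
        (le_trans (le_of_eq (mul_comm _ _)) (hsum_ge F hFA)) (by positivity)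
    refine aux p r hr hrp w₁ hw₁ A hband f
      (ε * (ENNReal.ofReal (1/2) * (ENNReal.ofReal d) ^ ((1:ℝ)/r)))
      (M * (ENNReal.ofReal (2*d)) ^ ((1:ℝ)/r)) ?_ ?_ ?_ ?_
    · exact ENNReal.mul_pos hε.ne' (mul_ne_zero (ENNReal.ofReal_pos.2 (by norm_num)).ne'
        (ENNReal.rpow_pos (ENNReal.ofReal_pos.2 hd) ENNReal.ofReal_ne_top).ne')
    · exact ENNReal.mul_ne_top hM
        (ENNReal.rpow_ne_top_of_nonneg (by positivity) ENNReal.ofReal_ne_top)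
    · intro F hFA
      have hs1 : ∀ t : Γ, (fun _ => (1:ℝ)) t = 1 ∨ (fun _ => (1:ℝ)) t = -1 := fun _ => Or.inl rfl
      have hle := hnorm_le F (fun _ => 1) hFA hs1
      have hne : weakNorm r w₂ (∑ γ ∈ F, (fun _ => (1:ℝ)) γ • e γ) ≠ ⊤ :=
        ne_top_of_le_ne_top (ENNReal.mul_ne_top
          (ENNReal.rpow_ne_top_of_nonneg (by positivity) ENNReal.ofReal_ne_top)
          (ENNReal.rpow_ne_top_of_nonneg (by positivity) (ENNReal.natCast_ne_top _))) hle
      have hTb := (hT _ hne).1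
      have hge := hnorm_ge F (fun _ => 1) hFA hs1
      have heq : T (∑ γ ∈ F, (fun _ => (1:ℝ)) γ • e γ) = fun t => ∑ γ ∈ F, f γ t := by
        rw [hTsum F (fun _ => 1)]
        funext t
        exact Finset.sum_congr rfl fun γ _ => one_mul _
      calc ε * (ENNReal.ofReal (1/2) * (ENNReal.ofReal d) ^ ((1:ℝ)/r))
            * (F.card : ℝ≥0∞) ^ ((1:ℝ)/r)
          = ε * (ENNReal.ofReal (1/2)
              * ((ENNReal.ofReal d) ^ ((1:ℝ)/r) * (F.card : ℝ≥0∞) ^ ((1:ℝ)/r))) := by ring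
        _ ≤ ε * weakNorm r w₂ (∑ γ ∈ F, (fun _ => (1:ℝ)) γ • e γ) := mul_le_mul_right hge ε
        _ ≤ weakNorm p w₁ (T (∑ γ ∈ F, (fun _ => (1:ℝ)) γ • e γ)) := hTb
        _ = weakNorm p w₁ (fun t => ∑ γ ∈ F, f γ t) := by rw [heq]
    · intro F s hFA hs
      have hle := hnorm_le F s hFA hs
      have hne : weakNorm r w₂ (∑ γ ∈ F, s γ • e γ) ≠ ⊤ :=
        ne_top_of_le_ne_top (ENNReal.mul_ne_top
          (ENNReal.rpow_ne_top_of_nonneg (by positivity) ENNReal.ofReal_ne_top)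
          (ENNReal.rpow_ne_top_of_nonneg (by positivity) (ENNReal.natCast_ne_top _))) hle
      have hTb := (hT _ hne).2
      calc weakNorm p w₁ (fun t => ∑ γ ∈ F, s γ * f γ t)
          = weakNorm p w₁ (T (∑ γ ∈ F, s γ • e γ)) := by rw [hTsum F s]
        _ ≤ M * weakNorm r w₂ (∑ γ ∈ F, s γ • e γ) := hTb
        _ ≤ M * ((ENNReal.ofReal (2*d)) ^ ((1:ℝ)/r) * (F.card : ℝ≥0∞) ^ ((1:ℝ)/r)) :=
            mul_le_mul_right hle M
        _ = M * (ENNReal.ofReal (2*d)) ^ ((1:ℝ)/r) * (F.card : ℝ≥0∞) ^ ((1:ℝ)/r) := by ring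
end

section
/- Glueing small atoms: let (Γ_n)_{n≥1} be pairwise disjoint sets with nondecreasing infinite cardinalities as in the construction, and define for x : ⋃_n (Γ_k × {n}) → ℝ the map Tx arising from replacing each atom (γ,n) of weight 2^{-n} (with γ ∈ Γ_k) by the set s(γ,n) = {(γ,n,l) : 1 ≤ l ≤ 2^{k-n-n_0+1}} of atoms of weight 2^{-k}. Then for every c > 0, the weighted measure of {|Tx| > c} equals 2^{1-n_0} times the weighted measure of {|x| > c}; hence T is an isomorphic embedding onto a subspace complemented by conditional expectation, with ‖Tx‖ = 2^{(1-n_0)/p} ‖x‖. -/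
open ENNReal

/-- A generic weak `L^p` quasi-norm for an atomic measure with weight `w`. -/
noncomputable def wgen {α : Type*} (p : ℝ) (w : α → ℝ≥0∞) (f : α → ℝ) : ℝ≥0∞ :=
  ⨆ (c : ℝ) (_ : 0 < c),
    ENNReal.ofReal c * (∑' a : {a : α // c < |f a|}, w a.1) ^ ((1 : ℝ)/p)

/-- Source index set: points `((k,γ),n)` with `γ ∈ Γ_k`, `n ≥ 1`, `k ≥ n₀ + n - 1`;
the atom `((k,γ),n)` has weight `2^{-n}`. -/
def SrcIdx (n₀ : ℕ) (Γ : ℕ → Type*) : Type _ :=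
  {q : (Σ k : ℕ, Γ k) × ℕ // 1 ≤ q.2 ∧ n₀ + q.2 - 1 ≤ q.1.1}

/-- Target index set: each source atom `((k,γ),n)` is replaced by the block
`s(γ,n)` of `2^{k+1-n-n₀}` atoms, each of weight `2^{-k}`. -/
def TgtIdx (n₀ : ℕ) (Γ : ℕ → Type*) : Type _ :=
  Σ q : SrcIdx n₀ Γ, Fin (2 ^ (q.1.1.1 + 1 - q.1.2 - n₀))

lemma tsum_subtype_le' {α : Type*} (P : α → Prop) (f : α → ℝ≥0∞) :
    (∑' x : {a : α // P a}, f x.1) ≤ ∑' x : α, f x := by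
  calc (∑' x : {a : α // P a}, f x.1) = ∑' x : {a : α | P a}, f x.1 := rfl
    _ = ∑' x, Set.indicator {a | P a} f x := tsum_subtype _ f
    _ ≤ _ := Summable.tsum_le_tsum (fun a => Set.indicator_le_self _ _ a)
        ENNReal.summable ENNReal.summable

lemma tsum_subtype_eq {α : Type*} (P : α → Prop) (f : α → ℝ≥0∞) :
    (∑' x : {a : α // P a}, f x.1) = ∑' x, Set.indicator {a | P a} f x :=
  calc (∑' x : {a : α // P a}, f x.1) = ∑' x : {a : α | P a}, f x.1 := rfl
    _ = _ := tsum_subtype _ f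

lemma tsum_block' {ι : Type*} {F : ι → Type*} [∀ i, Fintype (F i)]
    (G : (Σ i, F i) → ℝ≥0∞) (P : ι → Prop) :
    (∑' y : {y : Σ i, F i // P y.1}, G y.1) =
      ∑' i : {i // P i}, ∑ l : F i.1, G ⟨i.1, l⟩ := by
  rw [← Equiv.tsum_eq (⟨fun z => ⟨⟨z.1.1, z.2⟩, z.1.2⟩, fun y => ⟨⟨y.1.1, y.2⟩, y.1.2⟩,
      fun z => rfl, fun y => rfl⟩ :
      (Σ i : {i // P i}, F i.1) ≃ {y : Σ i, F i // P y.1}) (fun y => G y.1)]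
  rw [ENNReal.tsum_sigma']
  exact tsum_congr fun i => tsum_fintype _

lemma tsum_block {ι : Type*} {F : ι → Type*} [∀ i, Fintype (F i)]
    (v : ι → ℝ≥0∞) (P : ι → Prop) :
    (∑' y : {y : Σ i, F i // P y.1}, v y.1.1) =
      ∑' i : {i // P i}, (Fintype.card (F i.1) : ℝ≥0∞) * v i.1 := by
  rw [tsum_block' (fun y => v y.1) P]
  exact tsum_congr fun i => by simp [Finset.sum_const, nsmul_eq_mul, mul_comm]

lemma exists_maximal_shell (a r : ℝ) (h0 : a < r) (ha : 0 < a) :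
    ∃ J : ℕ, a * 2^J < r ∧ ¬ a * 2^(J+1) < r := by
  by_contra hcon
  push_neg at hcon
  have hall : ∀ j : ℕ, a * 2^j < r := by
    intro j
    induction j with
    | zero => simpa using h0
    | succ n ih => exact hcon n ih
  obtain ⟨N, hN⟩ := pow_unbounded_of_one_lt (r / a) (one_lt_two (α := ℝ))
  rw [div_lt_iff₀ ha] at hN
  have := hall N
  nlinarith

/-- Key weak-type estimate: if `E` is dominated by block averages of `|g|`, then its
distribution superlevel mass is controlled by the weak norm of `g`. -/
lemma key_estimate {ι : Type*} {F : ι → Type*} [∀ i, Fintype (F i)]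
    (hne : ∀ i, 0 < Fintype.card (F i))
    (p : ℝ) (hp : 1 < p) (w : ι → ℝ≥0∞) (hw : ∀ i, w i ≠ ⊤)
    (g : (Σ i, F i) → ℝ) (E : ι → ℝ)
    (hE : ∀ i, |E i| ≤ (Fintype.card (F i) : ℝ)⁻¹ * ∑ l : F i, |g ⟨i, l⟩|)
    (c : ℝ) (hc : 0 < c) :
    ENNReal.ofReal c * (∑' y : {y : Σ i, F i // c < |E y.1|}, w y.1.1) ^ ((1:ℝ)/p) ≤
      (2 * (2 * (1 - (2:ℝ≥0∞) ^ (1 - p))⁻¹) ^ ((1:ℝ)/p)) *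
        wgen p (fun y : Σ i, F i => w y.1) g := by
  set A := wgen p (fun y : Σ i, F i => w y.1) g with hA
  set K : ℝ≥0∞ := (1 - (2:ℝ≥0∞) ^ (1 - p))⁻¹ with hKdef
  have hp0 : (0:ℝ) < p := by linarith
  have hp0' : (0:ℝ) ≤ 1/p := by positivity
  have hc2 : 0 < c/2 := by linarith
  set a : ℝ≥0∞ := ENNReal.ofReal (c/2) with hadef
  have ha0 : a ≠ 0 := by
    simp only [hadef, ne_eq, ENNReal.ofReal_eq_zero, not_le]; exact hc2
  have hat : a ≠ ⊤ := ENNReal.ofReal_ne_top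
  -- superlevel bound for g
  have hD : ∀ s : ℝ, 0 < s →
      (∑' y : {y : Σ i, F i // s < |g y|}, w y.1.1) ≤ ((ENNReal.ofReal s)⁻¹ * A) ^ p := by
    intro s hs
    have hs0 : ENNReal.ofReal s ≠ 0 := by
      simp only [ne_eq, ENNReal.ofReal_eq_zero, not_le]; exact hs
    have h1 : ENNReal.ofReal s *
        (∑' y : {y : Σ i, F i // s < |g y|}, w y.1.1) ^ ((1:ℝ)/p) ≤ A := by
      rw [hA, wgen]
      exact le_iSup₂ (f := fun (c : ℝ) (_ : 0 < c) => ENNReal.ofReal c *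
        (∑' y : {y : Σ i, F i // c < |g y|}, w y.1.1) ^ ((1:ℝ)/p)) s hs
    have h2 : (∑' y : {y : Σ i, F i // s < |g y|}, w y.1.1) ^ ((1:ℝ)/p) ≤
        (ENNReal.ofReal s)⁻¹ * A := by
      have h3 := mul_le_mul_right h1 (ENNReal.ofReal s)⁻¹
      rwa [← mul_assoc, ENNReal.inv_mul_cancel hs0 ENNReal.ofReal_ne_top, one_mul] at h3
    calc (∑' y : {y : Σ i, F i // s < |g y|}, w y.1.1)
        = ((∑' y : {y : Σ i, F i // s < |g y|}, w y.1.1) ^ ((1:ℝ)/p)) ^ p := by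
          rw [← ENNReal.rpow_mul, one_div_mul_cancel (ne_of_gt hp0), ENNReal.rpow_one]
      _ ≤ _ := ENNReal.rpow_le_rpow h2 hp0.le
  -- truncation function
  set hfun : (Σ i, F i) → ℝ≥0∞ :=
    fun y => if c/2 < |g y| then ENNReal.ofReal |g y| else 0 with hfdef
  -- block bound
  have hblock : ∀ i : {i : ι // c < |E i|},
      a * ((Fintype.card (F i.1) : ℝ≥0∞) * w i.1) ≤
        ∑ l : F i.1, hfun ⟨i.1, l⟩ * w i.1 := by
    rintro ⟨i, hi⟩
    set m := Fintype.card (F i) with hm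
    have hm0 : (0:ℝ) < m := by exact_mod_cast hne i
    have hmE0 : (m : ℝ≥0∞) ≠ 0 := Nat.cast_ne_zero.mpr (hne i).ne'
    have hmEt : (m : ℝ≥0∞) ≠ ⊤ := ENNReal.natCast_ne_top m
    have hfin : a * ((m : ℝ≥0∞) * w i) ≠ ⊤ :=
      ENNReal.mul_ne_top hat (ENNReal.mul_ne_top hmEt (hw i))
    -- step 1 : ofReal c ≤ m⁻¹ * ∑ ofReal |g|
    have hS : ENNReal.ofReal c ≤ (m : ℝ≥0∞)⁻¹ * ∑ l : F i, ENNReal.ofReal |g ⟨i, l⟩| := by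
      have hlt : c < (m:ℝ)⁻¹ * ∑ l : F i, |g ⟨i, l⟩| := lt_of_lt_of_le hi (hE i)
      calc ENNReal.ofReal c ≤ ENNReal.ofReal ((m:ℝ)⁻¹ * ∑ l : F i, |g ⟨i, l⟩|) :=
            ENNReal.ofReal_le_ofReal hlt.le
        _ = (m : ℝ≥0∞)⁻¹ * ∑ l : F i, ENNReal.ofReal |g ⟨i, l⟩| := by
            rw [ENNReal.ofReal_mul (by positivity), ENNReal.ofReal_inv_of_pos hm0,
              ENNReal.ofReal_natCast, ENNReal.ofReal_sum_of_nonneg (fun l _ => abs_nonneg _)]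
    -- step 2 : multiply by m * w i
    have hmul : ENNReal.ofReal c * ((m : ℝ≥0∞) * w i) ≤
        (∑ l : F i, ENNReal.ofReal |g ⟨i, l⟩|) * w i := by
      calc ENNReal.ofReal c * ((m : ℝ≥0∞) * w i)
          ≤ ((m : ℝ≥0∞)⁻¹ * ∑ l : F i, ENNReal.ofReal |g ⟨i, l⟩|) * ((m : ℝ≥0∞) * w i) :=
            mul_le_mul_left hS _
        _ = ((m : ℝ≥0∞)⁻¹ * (m : ℝ≥0∞)) * ((∑ l : F i, ENNReal.ofReal |g ⟨i, l⟩|) * w i) := by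
            ring
        _ = (∑ l : F i, ENNReal.ofReal |g ⟨i, l⟩|) * w i := by
            rw [ENNReal.inv_mul_cancel hmE0 hmEt, one_mul]
    -- step 3 : pointwise truncation
    have hpt : ∀ l : F i, ENNReal.ofReal |g ⟨i, l⟩| ≤ a + hfun ⟨i, l⟩ := by
      intro l
      by_cases hl : c/2 < |g ⟨i, l⟩|
      · simp only [hfdef, if_pos hl]
        exact le_add_self
      · simp only [hfdef, if_neg hl, add_zero, hadef]
        exact ENNReal.ofReal_le_ofReal (not_lt.mp hl)
    have hsplit : (∑ l : F i, ENNReal.ofReal |g ⟨i, l⟩|) * w i ≤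
        a * ((m : ℝ≥0∞) * w i) + ∑ l : F i, hfun ⟨i, l⟩ * w i := by
      rw [Finset.sum_mul]
      calc (∑ l : F i, ENNReal.ofReal |g ⟨i, l⟩| * w i)
          ≤ ∑ l : F i, (a + hfun ⟨i, l⟩) * w i :=
            Finset.sum_le_sum (fun l _ => mul_le_mul_left (hpt l) _)
        _ = (∑ _l : F i, a * w i) + ∑ l : F i, hfun ⟨i, l⟩ * w i := by
            simp_rw [add_mul]; rw [Finset.sum_add_distrib]
        _ = a * ((m : ℝ≥0∞) * w i) + ∑ l : F i, hfun ⟨i, l⟩ * w i := by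
            rw [Finset.sum_const, Finset.card_univ, ← hm, nsmul_eq_mul]
            congr 1
            ring
    -- step 4 : cancel
    have hcc : a * ((m : ℝ≥0∞) * w i) + a * ((m : ℝ≥0∞) * w i) ≤
        a * ((m : ℝ≥0∞) * w i) + ∑ l : F i, hfun ⟨i, l⟩ * w i := by
      have h4 : ENNReal.ofReal c * ((m : ℝ≥0∞) * w i) =
          a * ((m : ℝ≥0∞) * w i) + a * ((m : ℝ≥0∞) * w i) := by
        rw [hadef, ← add_mul, ← ENNReal.ofReal_add hc2.le hc2.le]
        norm_num
      rw [← h4]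
      exact hmul.trans hsplit
    exact (ENNReal.add_le_add_iff_left hfin).mp hcc
  -- sum the block bounds
  have hUbound : a * (∑' y : {y : Σ i, F i // c < |E y.1|}, w y.1.1) ≤
      ∑' y : Σ i, F i, hfun y * w y.1 := by
    rw [tsum_block w (fun i => c < |E i|), ← ENNReal.tsum_mul_left]
    calc (∑' i : {i : ι // c < |E i|}, a * ((Fintype.card (F i.1) : ℝ≥0∞) * w i.1))
        ≤ ∑' i : {i : ι // c < |E i|}, ∑ l : F i.1, hfun ⟨i.1, l⟩ * w i.1 :=
          Summable.tsum_le_tsum hblock ENNReal.summable ENNReal.summable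
      _ = ∑' y : {y : Σ i, F i // c < |E y.1|}, hfun y.1 * w y.1.1 :=
          (tsum_block' (fun y => hfun y * w y.1) (fun i => c < |E i|)).symm
      _ ≤ _ := tsum_subtype_le' _ _
  -- shell decomposition
  have hshell : ∀ y : Σ i, F i, hfun y ≤
      2 * ∑' j : ℕ, (if c/2 * 2^j < |g y| then ENNReal.ofReal (c/2 * 2^j) else 0) := by
    intro y
    by_cases hy : c/2 < |g y|
    · obtain ⟨J, hJ1, hJ2⟩ := exists_maximal_shell (c/2) |g y| hy hc2
      calc hfun y = ENNReal.ofReal |g y| := by rw [hfdef]; exact if_pos hy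
        _ ≤ ENNReal.ofReal (c/2 * 2^(J+1)) := ENNReal.ofReal_le_ofReal (not_lt.mp hJ2)
        _ = 2 * ENNReal.ofReal (c/2 * 2^J) := by
            rw [show c/2 * 2^(J+1) = 2 * (c/2 * 2^J) by ring,
              ENNReal.ofReal_mul (by norm_num : (0:ℝ) ≤ 2)]
            norm_num
        _ ≤ 2 * ∑' j : ℕ, (if c/2 * 2^j < |g y| then ENNReal.ofReal (c/2 * 2^j) else 0) := by
            refine mul_le_mul_right ?_ 2
            refine le_trans (le_of_eq (if_pos hJ1).symm) (ENNReal.le_tsum J)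
    · rw [hfdef]
      simp only [if_neg hy]
      exact zero_le
  -- sum the shells
  have hE' : (∑' y : Σ i, F i, hfun y * w y.1) ≤
      2 * ∑' j : ℕ, ENNReal.ofReal (c/2 * 2^j) *
        ((ENNReal.ofReal (c/2 * 2^j))⁻¹ * A) ^ p := by
    have step1 : (∑' y : Σ i, F i, hfun y * w y.1) ≤
        2 * ∑' j : ℕ, ENNReal.ofReal (c/2 * 2^j) *
          (∑' y : {y : Σ i, F i // c/2 * 2^j < |g y|}, w y.1.1) := by
      calc (∑' y : Σ i, F i, hfun y * w y.1)
          ≤ ∑' y : Σ i, F i,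
              (2 * ∑' j : ℕ, (if c/2 * 2^j < |g y| then ENNReal.ofReal (c/2 * 2^j) else 0))
                * w y.1 :=
            Summable.tsum_le_tsum (fun y => mul_le_mul_left (hshell y) _)
              ENNReal.summable ENNReal.summable
        _ = 2 * ∑' y : Σ i, F i, ∑' j : ℕ,
              (if c/2 * 2^j < |g y| then ENNReal.ofReal (c/2 * 2^j) else 0) * w y.1 := by
            simp_rw [mul_assoc, ENNReal.tsum_mul_left]
            congr 1
            exact tsum_congr fun y => (ENNReal.tsum_mul_right).symm
        _ = 2 * ∑' j : ℕ, ∑' y : Σ i, F i,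
              (if c/2 * 2^j < |g y| then ENNReal.ofReal (c/2 * 2^j) else 0) * w y.1 := by
            rw [ENNReal.tsum_comm]
        _ = 2 * ∑' j : ℕ, ENNReal.ofReal (c/2 * 2^j) *
              (∑' y : {y : Σ i, F i // c/2 * 2^j < |g y|}, w y.1.1) := by
            congr 1
            refine tsum_congr fun j => ?_
            rw [show (∑' y : {y : Σ i, F i // c/2 * 2^j < |g y|}, w y.1.1)
                = ∑' y : Σ i, F i, Set.indicator {y : Σ i, F i | c/2 * 2^j < |g y|}
                    (fun y => w y.1) y from tsum_subtype_eq (fun y : Σ i, F i => c/2 * 2^j < |g y|) (fun y => w y.1), ← ENNReal.tsum_mul_left]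
            refine tsum_congr fun y => ?_
            rw [Set.indicator_apply]
            by_cases hy : c/2 * 2^j < |g y|
            · rw [if_pos hy, if_pos (show y ∈ {y : Σ i, F i | c/2 * 2^j < |g y|} from hy)]
            · rw [if_neg hy, if_neg (show y ∉ {y : Σ i, F i | c/2 * 2^j < |g y|} from hy),
                zero_mul, mul_zero]
    refine step1.trans (mul_le_mul_right ?_ 2)
    refine Summable.tsum_le_tsum (fun j => ?_) ENNReal.summable ENNReal.summable
    exact mul_le_mul_right (hD (c/2 * 2^j) (by positivity)) _
  -- evaluate each shell term
  have hterm : ∀ j : ℕ, ENNReal.ofReal (c/2 * 2^j) *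
      ((ENNReal.ofReal (c/2 * 2^j))⁻¹ * A) ^ p =
      (a ^ (1 - p) * ((2:ℝ≥0∞) ^ (1 - p)) ^ j) * A ^ p := by
    intro j
    set b := ENNReal.ofReal (c/2 * 2^j) with hb
    have hb0 : b ≠ 0 := by
      simp only [hb, ne_eq, ENNReal.ofReal_eq_zero, not_le]; positivity
    have hbt : b ≠ ⊤ := ENNReal.ofReal_ne_top
    have h1 : (b⁻¹ * A) ^ p = b ^ (-p) * A ^ p := by
      rw [ENNReal.mul_rpow_of_nonneg _ _ hp0.le, ENNReal.inv_rpow, ← ENNReal.rpow_neg]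
    have h2 : b * (b ^ (-p) * A ^ p) = b ^ (1 - p) * A ^ p := by
      rw [← mul_assoc]
      congr 1
      nth_rewrite 1 [← ENNReal.rpow_one b]
      rw [← ENNReal.rpow_add _ _ hb0 hbt, sub_eq_add_neg]
    have h3 : b = a * (2:ℝ≥0∞) ^ j := by
      rw [hb, hadef, ENNReal.ofReal_mul hc2.le, ENNReal.ofReal_pow (by norm_num : (0:ℝ) ≤ 2)]
      norm_num
    have h4 : b ^ (1 - p) = a ^ (1 - p) * ((2:ℝ≥0∞) ^ (1 - p)) ^ j := by
      rw [h3, ENNReal.mul_rpow_of_ne_top hat (by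
        exact ENNReal.pow_ne_top ENNReal.ofNat_ne_top)]
      congr 1
      rw [← ENNReal.rpow_natCast 2 j, ← ENNReal.rpow_mul, mul_comm, ENNReal.rpow_mul,
        ENNReal.rpow_natCast]
    rw [h1, h2, h4]
  -- geometric series
  have hsum : (∑' j : ℕ, (a ^ (1 - p) * ((2:ℝ≥0∞) ^ (1 - p)) ^ j) * A ^ p)
      = a ^ (1 - p) * A ^ p * K := by
    rw [ENNReal.tsum_mul_right, ENNReal.tsum_mul_left, ENNReal.tsum_geometric, hKdef]
    ring
  -- combine
  have hfinal : a * (∑' y : {y : Σ i, F i // c < |E y.1|}, w y.1.1) ≤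
      2 * (a ^ (1 - p) * A ^ p * K) := by
    refine hUbound.trans (hE'.trans ?_)
    rw [← hsum]
    refine mul_le_mul_right (le_of_eq (tsum_congr fun j => hterm j)) 2
  -- multiply by a^(p-1)
  have haz : a ^ (1 - p) * a ^ (p - 1) = 1 := by
    rw [← ENNReal.rpow_add _ _ ha0 hat]
    norm_num
  have hap : a * a ^ (p - 1) = a ^ p := by
    nth_rewrite 1 [← ENNReal.rpow_one a]
    rw [← ENNReal.rpow_add _ _ ha0 hat]
    norm_num
  have hmulb : a ^ p * (∑' y : {y : Σ i, F i // c < |E y.1|}, w y.1.1) ≤ 2 * K * A ^ p := by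
    calc a ^ p * (∑' y : {y : Σ i, F i // c < |E y.1|}, w y.1.1)
        = (a * (∑' y : {y : Σ i, F i // c < |E y.1|}, w y.1.1)) * a ^ (p - 1) := by
          rw [← hap]; ring
      _ ≤ (2 * (a ^ (1 - p) * A ^ p * K)) * a ^ (p - 1) := mul_le_mul_left hfinal _
      _ = (2 * K * A ^ p) * (a ^ (1 - p) * a ^ (p - 1)) := by ring
      _ = 2 * K * A ^ p := by rw [haz, mul_one]
  -- take p-th roots
  have hroot : a * (∑' y : {y : Σ i, F i // c < |E y.1|}, w y.1.1) ^ ((1:ℝ)/p) ≤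
      (2 * K) ^ ((1:ℝ)/p) * A := by
    have h := ENNReal.rpow_le_rpow hmulb hp0'
    rwa [ENNReal.mul_rpow_of_nonneg _ _ hp0', ENNReal.mul_rpow_of_nonneg _ _ hp0',
      ← ENNReal.rpow_mul a, ← ENNReal.rpow_mul A, mul_one_div_cancel (ne_of_gt hp0),
      ENNReal.rpow_one, ENNReal.rpow_one] at h
  -- conclude
  calc ENNReal.ofReal c * (∑' y : {y : Σ i, F i // c < |E y.1|}, w y.1.1) ^ ((1:ℝ)/p)
      = 2 * (a * (∑' y : {y : Σ i, F i // c < |E y.1|}, w y.1.1) ^ ((1:ℝ)/p)) := by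
        rw [← mul_assoc]
        congr 1
        rw [hadef, show c = 2 * (c/2) by ring, ENNReal.ofReal_mul (by norm_num : (0:ℝ) ≤ 2)]
        norm_num
    _ ≤ 2 * ((2 * K) ^ ((1:ℝ)/p) * A) := mul_le_mul_right hroot 2
    _ = (2 * (2 * K) ^ ((1:ℝ)/p)) * A := by ring

lemma part1 (n₀ : ℕ) (hn₀ : 1 ≤ n₀) (Γ : ℕ → Type*)
    (x : SrcIdx n₀ Γ → ℝ) (c : ℝ) :
    (∑' y : {y : TgtIdx n₀ Γ // c < |x y.1|}, (2 : ℝ≥0∞) ^ (-(y.1.1.1.1.1 : ℤ))) =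
      (2 : ℝ≥0∞) ^ ((1 : ℤ) - (n₀ : ℤ)) *
        ∑' q : {q : SrcIdx n₀ Γ // c < |x q|}, (2 : ℝ≥0∞) ^ (-(q.1.1.2 : ℤ)) := by
  have h := tsum_block (ι := SrcIdx n₀ Γ)
    (F := fun q => Fin (2 ^ (q.1.1.1 + 1 - q.1.2 - n₀)))
    (v := fun q => (2:ℝ≥0∞) ^ (-(q.1.1.1 : ℤ))) (P := fun q => c < |x q|)
  refine Eq.trans h ?_
  rw [← ENNReal.tsum_mul_left]
  refine tsum_congr fun q => ?_
  obtain ⟨hn, hk⟩ := q.1.2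
  set k := q.1.1.1.1 with hkdef
  set n := q.1.1.2 with hndef
  have he : ((2 ^ (k + 1 - n - n₀) : ℕ) : ℝ≥0∞) = (2:ℝ≥0∞) ^ ((k + 1 - n - n₀ : ℕ) : ℤ) := by
    push_cast
    rw [zpow_natCast]
  rw [Fintype.card_fin, he, ← ENNReal.zpow_add two_ne_zero ENNReal.ofNat_ne_top,
    ← ENNReal.zpow_add two_ne_zero ENNReal.ofNat_ne_top]
  congr 1
  omega

lemma part2 (p : ℝ) (hp : 1 < p) (n₀ : ℕ) (hn₀ : 1 ≤ n₀) (Γ : ℕ → Type*)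
    (x : SrcIdx n₀ Γ → ℝ) :
    wgen p (fun y : TgtIdx n₀ Γ => (2 : ℝ≥0∞) ^ (-(y.1.1.1.1 : ℤ))) (fun y => x y.1) =
      (2 : ℝ≥0∞) ^ (((1 : ℝ) - (n₀ : ℝ))/p) *
        wgen p (fun q : SrcIdx n₀ Γ => (2 : ℝ≥0∞) ^ (-(q.1.2 : ℤ))) x := by
  have hp0 : (0:ℝ) ≤ 1/p := by positivity
  simp only [wgen]
  simp_rw [mul_iSup]
  refine iSup_congr fun c => iSup_congr fun hc => ?_
  rw [part1 n₀ hn₀ Γ x c, ENNReal.mul_rpow_of_nonneg _ _ hp0]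
  have h2 : ((2:ℝ≥0∞) ^ ((1:ℤ) - (n₀:ℤ))) ^ ((1:ℝ)/p)
      = (2:ℝ≥0∞) ^ (((1:ℝ) - (n₀:ℝ))/p) := by
    rw [← ENNReal.rpow_intCast, ← ENNReal.rpow_mul]
    congr 1
    push_cast
    ring
  rw [h2]
  ring

/-- The conditional-expectation projection: average over each block. -/
noncomputable def Pproj (n₀ : ℕ) (Γ : ℕ → Type*) :
    (TgtIdx n₀ Γ → ℝ) →ₗ[ℝ] (SrcIdx n₀ Γ → ℝ) where
  toFun g := fun q => (Fintype.card (Fin (2 ^ (q.1.1.1 + 1 - q.1.2 - n₀))) : ℝ)⁻¹ *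
    ∑ l : Fin (2 ^ (q.1.1.1 + 1 - q.1.2 - n₀)), g ⟨q, l⟩
  map_add' g h := by
    funext q
    show _ * ∑ l : Fin (2 ^ (q.1.1.1 + 1 - q.1.2 - n₀)), (g ⟨q, l⟩ + h ⟨q, l⟩) = _ * _ + _ * _
    rw [Finset.sum_add_distrib, mul_add]
  map_smul' r g := by
    funext q
    simp only [Pi.smul_apply, smul_eq_mul, RingHom.id_apply]
    show _ * ∑ l : Fin (2 ^ (q.1.1.1 + 1 - q.1.2 - n₀)), r * g ⟨q, l⟩ = _
    rw [← Finset.mul_sum]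
    ring

/-- Glueing small atoms: replacing each atom of weight `2^{-n}` (sitting over `Γ_k`) by a
block of `2^{k-n-n₀+1}` atoms of weight `2^{-k}` multiplies all distribution functions by
exactly `2^{1-n₀}`; hence `T` is an embedding with `‖Tx‖ = 2^{(1-n₀)/p} ‖x‖`, whose range is
complemented by a bounded (conditional expectation) projection. -/
theorem glueing_small_atoms (p : ℝ) (hp : 1 < p) (n₀ : ℕ) (hn₀ : 1 ≤ n₀)
    (Γ : ℕ → Type*) :
    (∀ x : SrcIdx n₀ Γ → ℝ, ∀ c : ℝ, 0 < c →
      (∑' y : {y : TgtIdx n₀ Γ // c < |x y.1|}, (2 : ℝ≥0∞) ^ (-(y.1.1.1.1.1 : ℤ))) =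
        (2 : ℝ≥0∞) ^ ((1 : ℤ) - (n₀ : ℤ)) *
          ∑' q : {q : SrcIdx n₀ Γ // c < |x q|}, (2 : ℝ≥0∞) ^ (-(q.1.1.2 : ℤ))) ∧
    (∀ x : SrcIdx n₀ Γ → ℝ,
      wgen p (fun y : TgtIdx n₀ Γ => (2 : ℝ≥0∞) ^ (-(y.1.1.1.1 : ℤ))) (fun y => x y.1) =
        (2 : ℝ≥0∞) ^ (((1 : ℝ) - (n₀ : ℝ))/p) *
          wgen p (fun q : SrcIdx n₀ Γ => (2 : ℝ≥0∞) ^ (-(q.1.2 : ℤ))) x) ∧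
    ∃ P : (TgtIdx n₀ Γ → ℝ) →ₗ[ℝ] (SrcIdx n₀ Γ → ℝ),
      (∀ x : SrcIdx n₀ Γ → ℝ, P (fun y => x y.1) = x) ∧
      ∃ C : ℝ≥0∞, C ≠ ⊤ ∧ ∀ g : TgtIdx n₀ Γ → ℝ,
        wgen p (fun y : TgtIdx n₀ Γ => (2 : ℝ≥0∞) ^ (-(y.1.1.1.1 : ℤ))) (fun y => (P g) y.1) ≤
          C * wgen p (fun y : TgtIdx n₀ Γ => (2 : ℝ≥0∞) ^ (-(y.1.1.1.1 : ℤ))) g := by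
  have hcard : ∀ q : SrcIdx n₀ Γ,
      0 < Fintype.card (Fin (2 ^ (q.1.1.1 + 1 - q.1.2 - n₀))) := by
    intro q
    rw [Fintype.card_fin]
    positivity
  refine ⟨fun x c _ => part1 n₀ hn₀ Γ x c, fun x => part2 p hp n₀ hn₀ Γ x,
    Pproj n₀ Γ, ?_, ?_⟩
  · intro x
    funext q
    show (Fintype.card (Fin (2 ^ (q.1.1.1 + 1 - q.1.2 - n₀))) : ℝ)⁻¹ *
      (∑ _l : Fin (2 ^ (q.1.1.1 + 1 - q.1.2 - n₀)), x q) = x q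
    rw [Finset.sum_const, Finset.card_univ, nsmul_eq_mul, ← mul_assoc,
      inv_mul_cancel₀ (by exact_mod_cast (hcard q).ne'), one_mul]
  · set K : ℝ≥0∞ := (1 - (2:ℝ≥0∞) ^ (1 - p))⁻¹ with hKdef
    have hr1 : (2:ℝ≥0∞) ^ (1 - p) < 1 :=
      ENNReal.rpow_lt_one_of_one_lt_of_neg one_lt_two (by linarith)
    have hKt : K ≠ ⊤ :=
      ENNReal.inv_ne_top.mpr (by simp [tsub_eq_zero_iff_le, not_le, hr1])
    refine ⟨2 * (2 * K) ^ ((1:ℝ)/p), ?_, ?_⟩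
    · refine ENNReal.mul_ne_top ENNReal.ofNat_ne_top ?_
      exact ENNReal.rpow_ne_top_of_nonneg (by positivity)
        (ENNReal.mul_ne_top ENNReal.ofNat_ne_top hKt)
    · intro g
      have hw : ∀ q : SrcIdx n₀ Γ, (2:ℝ≥0∞) ^ (-(q.1.1.1 : ℤ)) ≠ ⊤ := by
        intro q
        exact (ENNReal.zpow_lt_top two_ne_zero ENNReal.ofNat_ne_top _).ne
      have hEdom : ∀ q : SrcIdx n₀ Γ,
          |Pproj n₀ Γ g q| ≤ (Fintype.card (Fin (2 ^ (q.1.1.1 + 1 - q.1.2 - n₀))) : ℝ)⁻¹ *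
            ∑ l : Fin (2 ^ (q.1.1.1 + 1 - q.1.2 - n₀)), |g ⟨q, l⟩| := by
        intro q
        show |(Fintype.card (Fin (2 ^ (q.1.1.1 + 1 - q.1.2 - n₀))) : ℝ)⁻¹ * _| ≤ _
        rw [abs_mul, abs_inv, Nat.abs_cast]
        exact mul_le_mul_of_nonneg_left (Finset.abs_sum_le_sum_abs _ _) (by positivity)
      conv_lhs => rw [wgen]
      refine iSup₂_le fun c hc => ?_
      exact key_estimate (ι := SrcIdx n₀ Γ)
        (F := fun q => Fin (2 ^ (q.1.1.1 + 1 - q.1.2 - n₀))) hcard p hp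
        (fun q => (2:ℝ≥0∞) ^ (-(q.1.1.1 : ℤ))) hw g (Pproj n₀ Γ g) hEdom c hc
end
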